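/- arXiv:1103.2487 — 8 statements merged into one kernel-verified Lean document; each statement's English description precedes it below -/
import Mathlib

section
/- A simple game G=(P,W) is a weighted majority game if and only if it admits a weighted representation in which ~_G-equivalent players receive equal weights; that is, G is weighted iff there exist nonnegative real weights w_1,...,w_n with w_i = w_j whenever i ~_G j and a threshold q such that X∈W iff Σ_{i∈X} w_i ≥ q. -/
lemma swap_mem_image' {α : Type*} [DecidableEq α] (i j a : α) (X : Finset α) :
    a ∈ X.image (Equiv.swap i j) ↔ Equiv.swap i j a ∈ X := by
  rw [Finset.mem_image]
  constructor
  · rintro ⟨b, hb, rfl⟩; simpa using hb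
  · intro h; exact ⟨_, h, Equiv.swap_apply_self _ _ _⟩

lemma swap_image_eq_insert {α : Type*} [DecidableEq α] {i j : α} (hij : i ≠ j)
    {X : Finset α} (hi : i ∈ X) (hj : j ∉ X) :
    X.image (Equiv.swap i j) = insert j (X.erase i) := by
  ext a
  rw [swap_mem_image']
  by_cases hai : a = i
  · subst hai
    simp [Equiv.swap_apply_left, hj, hij, Finset.mem_erase]
  by_cases haj : a = j
  · subst haj
    simp [Equiv.swap_apply_right, hi]
  · simp [Equiv.swap_apply_of_ne_of_ne hai haj, Finset.mem_erase, hai, haj]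

lemma swap_image_mem_iff {α : Type*} [DecidableEq α] (W : Set (Finset α)) {i j : α}
    (h : ∀ X : Finset α, i ∉ X → j ∉ X → (insert i X ∈ W ↔ insert j X ∈ W))
    (X : Finset α) : X.image (Equiv.swap i j) ∈ W ↔ X ∈ W := by
  rcases eq_or_ne i j with rfl | hij
  · simp [Equiv.swap_self, Finset.image_id]
  have key : ∀ (Y : Finset α), i ∈ Y → j ∉ Y →
      (Y.image (Equiv.swap i j) ∈ W ↔ Y ∈ W) := by
    intro Y hi hj
    rw [swap_image_eq_insert hij hi hj]
    have h1 := h (Y.erase i) (Finset.notMem_erase _ _)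
      (fun hjY => hj (Finset.mem_of_mem_erase hjY))
    rw [Finset.insert_erase hi] at h1
    exact h1.symm
  by_cases hi : i ∈ X <;> by_cases hj : j ∈ X
  · have hX : X.image (Equiv.swap i j) = X := by
      ext a
      rw [swap_mem_image']
      by_cases hai : a = i
      · subst hai; simp [Equiv.swap_apply_left, hi, hj]
      by_cases haj : a = j
      · subst haj; simp [Equiv.swap_apply_right, hi, hj]
      · simp [Equiv.swap_apply_of_ne_of_ne hai haj]
    rw [hX]
  · exact key X hi hj
  · rw [Equiv.swap_comm, swap_image_eq_insert hij.symm hj hi]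
    have h1 := h (X.erase j) (fun h' => hi (Finset.mem_of_mem_erase h'))
      (Finset.notMem_erase _ _)
    rw [Finset.insert_erase hj] at h1
    exact h1
  · have hX : X.image (Equiv.swap i j) = X := by
      ext a
      rw [swap_mem_image']
      by_cases hai : a = i
      · subst hai; simp [Equiv.swap_apply_left, hi, hj]
      by_cases haj : a = j
      · subst haj; simp [Equiv.swap_apply_right, hi, hj]
      · simp [Equiv.swap_apply_of_ne_of_ne hai haj]
    rw [hX]

/-- A simple game `G = (P, W)` is a weighted majority game if and
only if it admits a weighted representation in which `~_G`-equivalent players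
receive equal weights. -/
theorem stmt_4 {α : Type*} [Fintype α] [DecidableEq α] (W : Set (Finset α))
    (hne : W.Nonempty)
    (hmono : ∀ X Y : Finset α, X ∈ W → X ⊆ Y → Y ∈ W) :
    (∃ (w : α → ℝ) (q : ℝ), (∀ i, 0 ≤ w i) ∧
        ∀ X : Finset α, X ∈ W ↔ q ≤ ∑ i ∈ X, w i) ↔
      (∃ (w : α → ℝ) (q : ℝ), (∀ i, 0 ≤ w i) ∧
        (∀ i j : α, (∀ X : Finset α, i ∉ X → j ∉ X →
            (insert i X ∈ W ↔ insert j X ∈ W)) → w i = w j) ∧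
        ∀ X : Finset α, X ∈ W ↔ q ≤ ∑ i ∈ X, w i) := by
  classical
  constructor
  · rintro ⟨w, q, hw, hrep⟩
    -- the set of permutations preserving W
    set S : Finset (Equiv.Perm α) :=
      Finset.univ.filter (fun σ => ∀ X : Finset α, X.image σ ∈ W ↔ X ∈ W) with hS
    have hSmem : ∀ σ : Equiv.Perm α,
        σ ∈ S ↔ ∀ X : Finset α, X.image σ ∈ W ↔ X ∈ W := by
      intro σ; simp [hS]
    have h1 : (1 : Equiv.Perm α) ∈ S := by
      rw [hSmem]; intro X; simp [Finset.image_id]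
    have hSne : S.Nonempty := ⟨1, h1⟩
    refine ⟨fun i => ∑ σ ∈ S, w (σ i), S.card * q,
      fun i => Finset.sum_nonneg fun σ _ => hw _, ?_, ?_⟩
    · -- equal weights for equivalent players
      intro i j hij
      have hsw : Equiv.swap i j ∈ S := by
        rw [hSmem]; exact swap_image_mem_iff W hij
      have hclosed : ∀ σ ∈ S, σ * Equiv.swap i j ∈ S := by
        intro σ hσ
        rw [hSmem] at *
        intro X
        have : X.image ⇑(σ * Equiv.swap i j) = (X.image (Equiv.swap i j)).image σ := by
          rw [Finset.image_image]; rfl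
        rw [this, hσ, swap_image_mem_iff W hij]
      have key : ∀ σ ∈ S, w ((σ * Equiv.swap i j) j) = w (σ i) := by
        intro σ _
        simp [Equiv.Perm.mul_apply, Equiv.swap_apply_right]
      calc ∑ σ ∈ S, w (σ i) = ∑ σ ∈ S, w ((σ * Equiv.swap i j) j) := by
            refine Finset.sum_congr rfl fun σ hσ => (key σ hσ).symm
        _ = ∑ σ ∈ S, w (σ j) := by
            refine Finset.sum_nbij' (fun σ => σ * Equiv.swap i j)
              (fun σ => σ * Equiv.swap i j) (fun σ hσ => hclosed σ hσ)
              (fun σ hσ => hclosed σ hσ) ?_ ?_ ?_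
            · intro σ _; simp [mul_assoc]
            · intro σ _; simp [mul_assoc]
            · intro σ _; rfl
    · -- representation
      intro X
      have hsum : ∑ i ∈ X, ∑ σ ∈ S, w (σ i) = ∑ σ ∈ S, ∑ j ∈ X.image σ, w j := by
        rw [Finset.sum_comm]
        refine Finset.sum_congr rfl fun σ _ => ?_
        rw [Finset.sum_image (fun a _ b _ h => σ.injective h)]
      rw [hsum]
      constructor
      · intro hX
        have : ∀ σ ∈ S, q ≤ ∑ j ∈ X.image σ, w j := by
          intro σ hσ
          rw [hSmem] at hσ
          exact (hrep _).1 ((hσ X).2 hX)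
        calc (S.card : ℝ) * q = ∑ _σ ∈ S, q := by
              rw [Finset.sum_const, nsmul_eq_mul]
          _ ≤ _ := Finset.sum_le_sum this
      · intro hq
        by_contra hX
        have hlt : ∀ σ ∈ S, ∑ j ∈ X.image σ, w j < q := by
          intro σ hσ
          rw [hSmem] at hσ
          by_contra hge
          exact hX ((hσ X).1 ((hrep _).2 (le_of_not_gt hge)))
        have : ∑ σ ∈ S, ∑ j ∈ X.image σ, w j < ∑ _σ ∈ S, q :=
          Finset.sum_lt_sum_of_nonempty hSne hlt
        rw [Finset.sum_const, nsmul_eq_mul] at this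
        exact absurd hq this.not_ge
  · rintro ⟨w, q, hw, _, hrep⟩
    exact ⟨w, q, hw, hrep⟩
end

section
/- Let H be the disjunctive hierarchical game on P = P_1∪...∪P_m (disjoint nonempty levels, |P_i| = n_i) with thresholds k_1<...<k_m satisfying k_1 ≤ n_1 and k_i < k_{i-1}+n_i for 1<i<m. Then H has no dummy players if and only if k_m < k_{m-1} + n_m; moreover, if k_m ≥ k_{m-1} + n_m then every player of the last level P_m is a dummy. -/
/-- Cumulative union `P_1 ∪ ... ∪ P_i` of the first `i` (1-indexed) levels. -/
def cumUnion {α : Type*} [DecidableEq α] (P : ℕ → Finset α) (i : ℕ) : Finset α :=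
  (Finset.Icc 1 i).biUnion P

/-- Winning predicate of the disjunctive hierarchical game. -/
def disjWin {α : Type*} [DecidableEq α] (m : ℕ) (P : ℕ → Finset α) (k : ℕ → ℕ)
    (X : Finset α) : Prop :=
  ∃ i, 1 ≤ i ∧ i ≤ m ∧ k i ≤ (X ∩ cumUnion P i).card

/-- A minimal winning coalition: winning, and no proper subset is winning. -/
def minWinning {α : Type*} [DecidableEq α] (m : ℕ) (P : ℕ → Finset α) (k : ℕ → ℕ)
    (X : Finset α) : Prop :=
  disjWin m P k X ∧ ∀ Y : Finset α, Y ⊂ X → ¬ disjWin m P k Y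

/-- A dummy player: one that belongs to no minimal winning coalition. -/
def isDummy {α : Type*} [DecidableEq α] (m : ℕ) (P : ℕ → Finset α) (k : ℕ → ℕ)
    (p : α) : Prop :=
  ∀ X : Finset α, minWinning m P k X → p ∉ X

section Aux

variable {α : Type*} [DecidableEq α]

lemma mem_cumUnion {P : ℕ → Finset α} {i : ℕ} {a : α} :
    a ∈ cumUnion P i ↔ ∃ t, 1 ≤ t ∧ t ≤ i ∧ a ∈ P t := by
  simp [cumUnion, Finset.mem_Icc, and_assoc]

lemma subset_cumUnion {P : ℕ → Finset α} {j : ℕ} (hj : 1 ≤ j) :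
    P j ⊆ cumUnion P j :=
  fun a ha => mem_cumUnion.mpr ⟨j, hj, le_refl j, ha⟩

lemma cumUnion_mono {P : ℕ → Finset α} {i j : ℕ} (h : i ≤ j) :
    cumUnion P i ⊆ cumUnion P j := by
  intro a ha
  obtain ⟨t, h1, h2, h3⟩ := mem_cumUnion.mp ha
  exact mem_cumUnion.mpr ⟨t, h1, le_trans h2 h, h3⟩

lemma cumUnion_succ {P : ℕ → Finset α} {j : ℕ} :
    cumUnion P (j + 1) = cumUnion P j ∪ P (j + 1) := by
  ext a
  simp only [Finset.mem_union, mem_cumUnion]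
  constructor
  · rintro ⟨t, h1, h2, h3⟩
    rcases eq_or_lt_of_le h2 with rfl | h
    · exact Or.inr h3
    · exact Or.inl ⟨t, h1, by omega, h3⟩
  · rintro (⟨t, h1, h2, h3⟩ | h)
    · exact ⟨t, h1, by omega, h3⟩
    · exact ⟨j + 1, by omega, le_refl _, h⟩

lemma not_mem_cum {m : ℕ} {P : ℕ → Finset α}
    (hdisj : ∀ i j, 1 ≤ i → i < j → j ≤ m → Disjoint (P i) (P j))
    {p : α} {j i : ℕ} (hp : p ∈ P j) (hij : i < j) (hjm : j ≤ m) :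
    p ∉ cumUnion P i := by
  intro h
  obtain ⟨t, h1, h2, h3⟩ := mem_cumUnion.mp h
  exact (Finset.disjoint_left.mp (hdisj t j h1 (by omega) hjm) h3) hp

lemma disjoint_cum_P {m : ℕ} {P : ℕ → Finset α}
    (hdisj : ∀ i j, 1 ≤ i → i < j → j ≤ m → Disjoint (P i) (P j))
    {i j : ℕ} (hij : i < j) (hjm : j ≤ m) :
    Disjoint (cumUnion P i) (P j) :=
  Finset.disjoint_right.mpr fun p hp => not_mem_cum hdisj hp hij hjm

/-- Key construction: a "near-winning" set at level `j` avoiding a given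
player `q ∈ P j`. -/
lemma build {m : ℕ} (P : ℕ → Finset α) (k : ℕ → ℕ)
    (hdisj : ∀ i j, 1 ≤ i → i < j → j ≤ m → Disjoint (P i) (P j))
    (hlvlne : ∀ i, 1 ≤ i → i ≤ m → (P i).Nonempty)
    (hkpos : ∀ i, 1 ≤ i → i ≤ m → 0 < k i)
    (hkmono : ∀ i j, 1 ≤ i → i < j → j ≤ m → k i < k j)
    (ha : k 1 ≤ (P 1).card) :
    ∀ j, 1 ≤ j → j ≤ m →
      (∀ i, 1 < i → i ≤ j → k i < k (i - 1) + (P i).card) →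
      ∀ q ∈ P j, ∃ B : Finset α, B ⊆ cumUnion P j ∧ q ∉ B ∧
        B.card + 1 = k j ∧ ∀ i, 1 ≤ i → i < j → (B ∩ cumUnion P i).card < k i := by
  intro j
  induction j with
  | zero => omega
  | succ j' ih =>
    intro _ hjm hineq q hq
    rcases Nat.eq_zero_or_pos j' with rfl | hj'
    · -- base case j = 1
      simp only [Nat.zero_add] at hq hjm ⊢
      have hk1 : 0 < k 1 := hkpos 1 le_rfl (by omega)
      have hcard : k 1 - 1 ≤ ((P 1).erase q).card := by
        rw [Finset.card_erase_of_mem hq]; omega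
      obtain ⟨B, hBsub, hBcard⟩ := Finset.exists_subset_card_eq hcard
      have hqP : 0 < (P 1).card := Finset.card_pos.mpr ⟨q, hq⟩
      refine ⟨B, ?_, ?_, by omega, ?_⟩
      · exact fun a haB => subset_cumUnion le_rfl (Finset.erase_subset _ _ (hBsub haB))
      · exact fun hqB => (Finset.notMem_erase q (P 1)) (hBsub hqB)
      · intro i h1 h2; omega
    · -- inductive step: j = j' + 1 with j' ≥ 1
      obtain ⟨q', hq'⟩ := hlvlne j' hj' (by omega)
      obtain ⟨B', hB'sub, _, hB'card, hB'lt⟩ :=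
        ih hj' (by omega) (fun i h1 h2 => hineq i h1 (by omega)) q' hq'
      have hkj' : k j' < k (j' + 1) := hkmono j' (j' + 1) hj' (by omega) hjm
      have hstep : k (j' + 1) < k j' + (P (j' + 1)).card := by
        have := hineq (j' + 1) (by omega) le_rfl
        simpa using this
      have hTcard : k (j' + 1) - k j' ≤ ((P (j' + 1)).erase q).card := by
        rw [Finset.card_erase_of_mem hq]; omega
      obtain ⟨T, hTsub, hTcardEq⟩ := Finset.exists_subset_card_eq hTcard
      have hTsubP : T ⊆ P (j' + 1) := fun a ha => Finset.erase_subset _ _ (hTsub ha)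
      have hdisjBT : Disjoint B' T :=
        Finset.disjoint_of_subset_left hB'sub
          (Finset.disjoint_of_subset_right hTsubP
            (disjoint_cum_P hdisj (by omega) hjm))
      refine ⟨B' ∪ T, ?_, ?_, ?_, ?_⟩
      · intro a ha
        rcases Finset.mem_union.mp ha with h | h
        · exact cumUnion_mono (by omega) (hB'sub h)
        · exact subset_cumUnion (by omega) (hTsubP h)
      · intro hqB
        rcases Finset.mem_union.mp hqB with h | h
        · exact not_mem_cum hdisj hq (by omega) hjm (hB'sub h)
        · exact Finset.notMem_erase q _ (hTsub h)
      · rw [Finset.card_union_of_disjoint hdisjBT, hTcardEq]; omega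
      · intro i h1 h2
        have hT0 : T ∩ cumUnion P i = ∅ := by
          apply Finset.eq_empty_of_forall_notMem
          intro a ha
          obtain ⟨haT, haC⟩ := Finset.mem_inter.mp ha
          exact not_mem_cum hdisj (hTsubP haT) (by omega) hjm haC
        rw [Finset.union_inter_distrib_right, hT0, Finset.union_empty]
        rcases lt_or_eq_of_le (by omega : i ≤ j') with h | rfl
        · exact hB'lt i h1 h
        · have : B' ∩ cumUnion P i = B' := Finset.inter_eq_left.mpr hB'sub
          rw [this]; omega

/-- Under the canonical conditions plus `k m < k (m-1) + n_m`, every player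
belongs to a minimal winning coalition. -/
lemma not_dummy {m : ℕ} (hm : 2 ≤ m) (P : ℕ → Finset α) (k : ℕ → ℕ)
    (hdisj : ∀ i j, 1 ≤ i → i < j → j ≤ m → Disjoint (P i) (P j))
    (hlvlne : ∀ i, 1 ≤ i → i ≤ m → (P i).Nonempty)
    (hkpos : ∀ i, 1 ≤ i → i ≤ m → 0 < k i)
    (hkmono : ∀ i j, 1 ≤ i → i < j → j ≤ m → k i < k j)
    (ha : k 1 ≤ (P 1).card)
    (hb : ∀ i, 1 < i → i < m → k i < k (i - 1) + (P i).card)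
    (hlast : k m < k (m - 1) + (P m).card)
    {p : α} {j : ℕ} (hj1 : 1 ≤ j) (hjm : j ≤ m) (hp : p ∈ P j) :
    ¬ isDummy m P k p := by
  have hineq : ∀ i, 1 < i → i ≤ j → k i < k (i - 1) + (P i).card := by
    intro i h1 h2
    rcases lt_or_eq_of_le (le_trans h2 hjm) with h | rfl
    · exact hb i h1 h
    · exact hlast
  obtain ⟨B, hBsub, hpB, hBcard, hBlt⟩ :=
    build P k hdisj hlvlne hkpos hkmono ha j hj1 hjm hineq p hp
  intro hdum
  refine hdum (insert p B) ⟨?_, ?_⟩ (Finset.mem_insert_self p B)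
  · -- insert p B is winning at level j
    refine ⟨j, hj1, hjm, ?_⟩
    have hXsub : insert p B ⊆ cumUnion P j := by
      intro a ha
      rcases Finset.mem_insert.mp ha with rfl | h
      · exact subset_cumUnion hj1 hp
      · exact hBsub h
    rw [Finset.inter_eq_left.mpr hXsub, Finset.card_insert_of_notMem hpB]
    omega
  · -- no proper subset is winning
    rintro Y hY ⟨i, hi1, him, hki⟩
    have hYcard : Y.card < (insert p B).card := Finset.card_lt_card hY
    have hXcard : (insert p B).card = k j := by
      rw [Finset.card_insert_of_notMem hpB]; omega
    rcases lt_or_ge i j with hij | hij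
    · -- i < j : Y ∩ C_i ⊆ B ∩ C_i which is too small
      have hpC : p ∉ cumUnion P i := not_mem_cum hdisj hp hij hjm
      have hsub : Y ∩ cumUnion P i ⊆ B ∩ cumUnion P i := by
        have h1 : Y ∩ cumUnion P i ⊆ insert p B ∩ cumUnion P i :=
          Finset.inter_subset_inter hY.subset (le_refl _)
        rwa [Finset.insert_inter_of_notMem hpC] at h1
      have := Finset.card_le_card hsub
      have := hBlt i hi1 hij
      omega
    · -- i ≥ j : Y is too small overall
      have hkj : k j ≤ k i := by
        rcases lt_or_eq_of_le hij with h | rfl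
        · exact le_of_lt (hkmono j i hj1 h him)
        · exact le_rfl
      have : (Y ∩ cumUnion P i).card ≤ Y.card :=
        Finset.card_le_card (Finset.inter_subset_left)
      omega

/-- If `k (m-1) + n_m ≤ k m`, every player of the last level is a dummy. -/
lemma last_level_dummy {m : ℕ} (hm : 2 ≤ m) (P : ℕ → Finset α) (k : ℕ → ℕ)
    (hdisj : ∀ i j, 1 ≤ i → i < j → j ≤ m → Disjoint (P i) (P j))
    (hle : k (m - 1) + (P m).card ≤ k m)
    {p : α} (hp : p ∈ P m) : isDummy m P k p := by
  obtain ⟨m', rfl⟩ : ∃ m', m = m' + 1 := ⟨m - 1, by omega⟩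
  have hm' : 1 ≤ m' := by omega
  intro X hX hpX
  obtain ⟨hwin, hmin⟩ := hX
  have hnY0 := hmin (X.erase p) (Finset.erase_ssubset hpX)
  have hnY : ∀ i, 1 ≤ i → i ≤ m' + 1 →
      (X.erase p ∩ cumUnion P i).card < k i := by
    intro i h1 h2
    by_contra h
    push_neg at h
    exact hnY0 ⟨i, h1, h2, h⟩
  obtain ⟨i, hi1, him, hki⟩ := hwin
  rcases lt_or_eq_of_le him with hilt | rfl
  · -- witness at level i < m : erase p doesn't change X ∩ C_i
    apply absurd hki
    push_neg
    have hpC : p ∉ cumUnion P i := not_mem_cum hdisj hp hilt le_rfl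
    have heq : X.erase p ∩ cumUnion P i = X ∩ cumUnion P i := by
      rw [Finset.erase_inter, Finset.erase_eq_of_notMem]
      exact fun h => hpC (Finset.mem_inter.mp h).2
    have := hnY i hi1 (le_of_lt hilt)
    rw [heq] at this
    exact this
  · -- witness at the top level
    have hpC : p ∉ cumUnion P m' := not_mem_cum hdisj hp (by omega) le_rfl
    have heq : X.erase p ∩ cumUnion P m' = X ∩ cumUnion P m' := by
      rw [Finset.erase_inter, Finset.erase_eq_of_notMem]
      exact fun h => hpC (Finset.mem_inter.mp h).2
    have hlt : (X ∩ cumUnion P m').card < k m' := by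
      have := hnY m' hm' (by omega)
      rw [heq] at this; exact this
    have hsplit : X ∩ cumUnion P (m' + 1) ⊆ (X ∩ cumUnion P m') ∪ P (m' + 1) := by
      rw [cumUnion_succ, Finset.inter_union_distrib_left]
      exact Finset.union_subset_union (le_refl _) (Finset.inter_subset_right)
    have hcard : (X ∩ cumUnion P (m' + 1)).card ≤
        (X ∩ cumUnion P m').card + (P (m' + 1)).card :=
      le_trans (Finset.card_le_card hsplit) (Finset.card_union_le _ _)
    simp only [Nat.add_sub_cancel] at hle
    omega

end Aux

/-- a canonically represented disjunctive hierarchical game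
(`k_1 ≤ n_1`, `k_i < k_{i-1} + n_i` for `1 < i < m`) has no dummy players iff
`k_m < k_{m-1} + n_m`; moreover if `k_m ≥ k_{m-1} + n_m` then every player of
the last level `P_m` is a dummy. -/
theorem stmt_6 {α : Type*} [Fintype α] [DecidableEq α]
    (m : ℕ) (hm : 2 ≤ m) (P : ℕ → Finset α) (k : ℕ → ℕ)
    (hdisj : ∀ i j, 1 ≤ i → i < j → j ≤ m → Disjoint (P i) (P j))
    (hlvlne : ∀ i, 1 ≤ i → i ≤ m → (P i).Nonempty)
    (hcover : ∀ a : α, ∃ i, 1 ≤ i ∧ i ≤ m ∧ a ∈ P i)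
    (hkpos : ∀ i, 1 ≤ i → i ≤ m → 0 < k i)
    (hkmono : ∀ i j, 1 ≤ i → i < j → j ≤ m → k i < k j)
    (ha : k 1 ≤ (P 1).card)
    (hb : ∀ i, 1 < i → i < m → k i < k (i - 1) + (P i).card) :
    ((∀ p : α, ¬ isDummy m P k p) ↔ k m < k (m - 1) + (P m).card) ∧
      (k (m - 1) + (P m).card ≤ k m → ∀ p ∈ P m, isDummy m P k p) := by
  constructor
  · constructor
    · intro hnd
      by_contra hge
      push_neg at hge
      obtain ⟨p, hp⟩ := hlvlne m (by omega) le_rfl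
      exact hnd p (last_level_dummy hm P k hdisj hge hp)
    · intro hlast p
      obtain ⟨j, hj1, hjm, hp⟩ := hcover p
      exact not_dummy hm P k hdisj hlvlne hkpos hkmono ha hb hlast hj1 hjm hp
  · intro hle p hp
    exact last_level_dummy hm P k hdisj hle hp
end

section
/- The dual of a disjunctive hierarchical game is the conjunctive hierarchical game with the dualized thresholds: let H_∃ be the disjunctive hierarchical game on P = P_1∪...∪P_m (|P_i| = n_i) with thresholds k_1<...<k_m, and set k*_i = n_1+...+n_i − k_i + 1. Then a coalition X⊆P is winning in the dual game (H_∃)* if and only if |X∩(P_1∪...∪P_i)| ≥ k*_i for every i∈{1,...,m}. -/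
/-- the dual of a disjunctive hierarchical game is the conjunctive
hierarchical game with the dualized thresholds `k*_i = n_1 + ... + n_i - k_i + 1`:
a coalition `X` is winning in `(H_∃)*` (i.e. its complement `P ∖ X` is losing in
`H_∃`; the player set `P` is the whole finite type) iff
`|X ∩ (P_1 ∪ ... ∪ P_i)| ≥ k*_i` for every `i ∈ {1, ..., m}`. -/
theorem stmt_9 {α : Type*} [Fintype α] [DecidableEq α]
    (m : ℕ) (hm : 1 ≤ m) (P : ℕ → Finset α) (k : ℕ → ℕ)
    (hdisj : ∀ i j, 1 ≤ i → i < j → j ≤ m → Disjoint (P i) (P j))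
    (hlvlne : ∀ i, 1 ≤ i → i ≤ m → (P i).Nonempty)
    (hcover : ∀ a : α, ∃ i, 1 ≤ i ∧ i ≤ m ∧ a ∈ P i)
    (hkpos : ∀ i, 1 ≤ i → i ≤ m → 0 < k i)
    (hkmono : ∀ i j, 1 ≤ i → i < j → j ≤ m → k i < k j) :
    ∀ X : Finset α,
      ¬ disjWin m P k Xᶜ ↔
        ∀ i, 1 ≤ i → i ≤ m →
          (∑ j ∈ Finset.Icc 1 i, ((P j).card : ℤ)) - (k i : ℤ) + 1 ≤
            ((X ∩ cumUnion P i).card : ℤ) := by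
  intro X
  have hcard : ∀ i, i ≤ m → ((cumUnion P i).card : ℤ) = ∑ j ∈ Finset.Icc 1 i, ((P j).card : ℤ) := by
    intro i hi
    have : (cumUnion P i).card = ∑ j ∈ Finset.Icc 1 i, (P j).card := by
      apply Finset.card_biUnion
      intro a ha b hb hab
      simp only [Finset.mem_coe, Finset.mem_Icc] at ha hb
      rcases lt_or_gt_of_ne hab with h | h
      · exact hdisj a b ha.1 h (hb.2.trans hi)
      · exact (hdisj b a hb.1 h (ha.2.trans hi)).symm
    rw [this]
    push_cast
    ring
  have hsplit : ∀ i, ((Xᶜ ∩ cumUnion P i).card : ℤ) =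
      ((cumUnion P i).card : ℤ) - ((X ∩ cumUnion P i).card : ℤ) := by
    intro i
    have h1 : (X ∩ cumUnion P i) ∪ (Xᶜ ∩ cumUnion P i) = cumUnion P i := by
      ext a; simp [Finset.mem_inter, Finset.mem_compl]; tauto
    have h2 : Disjoint (X ∩ cumUnion P i) (Xᶜ ∩ cumUnion P i) := by
      apply Finset.disjoint_left.2
      intro a ha hb
      simp only [Finset.mem_inter, Finset.mem_compl] at ha hb
      exact hb.1 ha.1
    have := Finset.card_union_of_disjoint h2
    rw [h1] at this
    rw [this]; push_cast; ring
  unfold disjWin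
  push_neg
  constructor
  · intro h i h1 h2
    have := h i h1 h2
    have hc := hcard i h2
    have hs := hsplit i
    omega
  · intro h i h1 h2
    have := h i h1 h2
    have hc := hcard i h2
    have hs := hsplit i
    omega
end

section
/- The dual of a conjunctive hierarchical game is the disjunctive hierarchical game with the dualized thresholds: let H_∀ be the conjunctive hierarchical game on P = P_1∪...∪P_m (|P_i| = n_i) with thresholds k_1<...<k_{m-1}≤k_m, and set k*_i = n_1+...+n_i − k_i + 1. Then a coalition X⊆P is winning in the dual game (H_∀)* if and only if there exists i∈{1,...,m} with |X∩(P_1∪...∪P_i)| ≥ k*_i. -/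
/-- Winning predicate of the conjunctive hierarchical game with `m` levels:
`X` is winning iff `|X ∩ (P_1 ∪ ... ∪ P_i)| ≥ k_i` for every `i ∈ {1, ..., m}`. -/
def conjWin {α : Type*} [DecidableEq α] (m : ℕ) (P : ℕ → Finset α) (k : ℕ → ℕ)
    (X : Finset α) : Prop :=
  ∀ i, 1 ≤ i → i ≤ m → k i ≤ (X ∩ cumUnion P i).card

/-- the dual of a conjunctive hierarchical game (with thresholds
`k_1 < ... < k_{m-1} ≤ k_m`) is the disjunctive hierarchical game with the
dualized thresholds `k*_i = n_1 + ... + n_i - k_i + 1`: a coalition `X` is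
winning in `(H_∀)*` (i.e. its complement is losing in `H_∀`; the player set is
the whole finite type) iff `|X ∩ (P_1 ∪ ... ∪ P_i)| ≥ k*_i` for some `i`. -/
theorem stmt_10 {α : Type*} [Fintype α] [DecidableEq α]
    (m : ℕ) (hm : 1 ≤ m) (P : ℕ → Finset α) (k : ℕ → ℕ)
    (hdisj : ∀ i j, 1 ≤ i → i < j → j ≤ m → Disjoint (P i) (P j))
    (hlvlne : ∀ i, 1 ≤ i → i ≤ m → (P i).Nonempty)
    (hcover : ∀ a : α, ∃ i, 1 ≤ i ∧ i ≤ m ∧ a ∈ P i)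
    (hkpos : ∀ i, 1 ≤ i → i ≤ m → 0 < k i)
    (hkmono : ∀ i, 1 ≤ i → i + 1 < m → k i < k (i + 1))
    (hklast : 2 ≤ m → k (m - 1) ≤ k m) :
    ∀ X : Finset α,
      ¬ conjWin m P k Xᶜ ↔
        ∃ i, 1 ≤ i ∧ i ≤ m ∧
          (∑ j ∈ Finset.Icc 1 i, ((P j).card : ℤ)) - (k i : ℤ) + 1 ≤
            ((X ∩ cumUnion P i).card : ℤ) := by
  intro X
  unfold conjWin
  push_neg
  apply exists_congr
  intro i
  refine and_congr_right fun h1 => and_congr_right fun him => ?_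
  -- card of cumUnion is the sum of cards
  have hcard : (cumUnion P i).card = ∑ j ∈ Finset.Icc 1 i, (P j).card := by
    unfold cumUnion
    apply Finset.card_biUnion
    intro a ha b hb hab
    simp only [Finset.coe_Icc, Set.mem_Icc] at ha hb
    rcases lt_or_gt_of_ne hab with h | h
    · exact hdisj a b ha.1 h (hb.2.trans him)
    · exact (hdisj b a hb.1 h (ha.2.trans him)).symm
  have hsplit : (Xᶜ ∩ cumUnion P i).card + (X ∩ cumUnion P i).card
      = (cumUnion P i).card := by
    rw [← Finset.card_union_of_disjoint]
    · congr 1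
      ext a
      simp only [Finset.mem_union, Finset.mem_inter, Finset.mem_compl]
      tauto
    · exact Finset.disjoint_left.2 (by
        intro a ha hb
        simp only [Finset.mem_inter, Finset.mem_compl] at ha hb
        exact ha.1 hb.1)
  constructor
  · intro hlt
    have : ((Xᶜ ∩ cumUnion P i).card : ℤ) + ((X ∩ cumUnion P i).card : ℤ)
        = ∑ j ∈ Finset.Icc 1 i, ((P j).card : ℤ) := by
      have h := hsplit
      rw [hcard] at h
      exact_mod_cast h
    have hlt' : ((Xᶜ ∩ cumUnion P i).card : ℤ) < (k i : ℤ) := by exact_mod_cast hlt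
    omega
  · intro hle
    have : ((Xᶜ ∩ cumUnion P i).card : ℤ) + ((X ∩ cumUnion P i).card : ℤ)
        = ∑ j ∈ Finset.Icc 1 i, ((P j).card : ℤ) := by
      have h := hsplit
      rw [hcard] at h
      exact_mod_cast h
    have : ((Xᶜ ∩ cumUnion P i).card : ℤ) < (k i : ℤ) := by omega
    exact_mod_cast this
end

section
/- Every canonical disjunctive hierarchical game has exactly one shift-maximal losing coalition: let G = H_∃(n,k) be the canonical disjunctive hierarchical game on the multiset P̄={1^{n_1},...,m^{n_m}} with k_1 ≤ n_1 and k_i < k_{i-1}+n_i for 1<i<m. If k_m < k_{m-1}+n_m, the unique shift-maximal losing submultiset is M = {1^{k_1−1}, 2^{k_2−k_1}, ..., m^{k_m−k_{m−1}}}; if k_m ≥ k_{m-1}+n_m, it is M = {1^{k_1−1}, 2^{k_2−k_1}, ..., (m−1)^{k_{m−1}−k_{m−2}}, m^{n_m}}. -/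
/-- A valid profile (submultiset of `P̄ = {1^{n_1}, ..., m^{n_m}}`), recorded as
the function giving the multiplicity of each (1-indexed) level. -/
def validProfile (m : ℕ) (n : ℕ → ℕ) (l : ℕ → ℕ) : Prop :=
  (∀ j, 1 ≤ j → j ≤ m → l j ≤ n j) ∧ ∀ j, (j = 0 ∨ m < j) → l j = 0

/-- Winning predicate of the canonical disjunctive hierarchical game `H_∃(n,k)`:
`{1^{ℓ_1}, ..., m^{ℓ_m}}` is winning iff `ℓ_1 + ... + ℓ_i ≥ k_i` for some `i`. -/
def mWin (m : ℕ) (k : ℕ → ℕ) (l : ℕ → ℕ) : Prop :=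
  ∃ i, 1 ≤ i ∧ i ≤ m ∧ k i ≤ ∑ j ∈ Finset.Icc 1 i, l j

/-- The profile obtained from `A` by a shift moving one copy of level `i` to a
(lower) level `j`. -/
def shifted (A : ℕ → ℕ) (i j : ℕ) : ℕ → ℕ :=
  fun l => if l = i then A i - 1 else if l = j then A j + 1 else A l

/-- A shift-maximal losing submultiset `Y` of the game `W` on
`P̄ = {1^{n_1}, ..., m^{n_m}}`: `Y` is a losing submultiset, every submultiset
strictly containing `Y` is winning, and there is no losing submultiset from
which `Y` is obtained by a shift. -/
def shiftMaxLosing (m : ℕ) (n : ℕ → ℕ) (W : (ℕ → ℕ) → Prop) (Y : ℕ → ℕ) : Prop :=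
  validProfile m n Y ∧ ¬ W Y ∧
    (∀ Z, validProfile m n Z → (∀ j, Y j ≤ Z j) → Y ≠ Z → W Z) ∧
    ¬ ∃ A i j, validProfile m n A ∧ ¬ W A ∧ 1 ≤ i ∧ i < j ∧ j ≤ m ∧
        1 ≤ A i ∧ A j < n j ∧ Y = shifted A i j

/-- The submultiset `M = {1^{k_1 - 1}, 2^{k_2 - k_1}, ..., m^{k_m - k_{m-1}}}`. -/
def Mprof (m : ℕ) (k : ℕ → ℕ) : ℕ → ℕ :=
  fun j => if j = 1 then k 1 - 1 else if 1 < j ∧ j ≤ m then k j - k (j - 1) else 0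

/-- The submultiset
`M' = {1^{k_1 - 1}, 2^{k_2 - k_1}, ..., (m-1)^{k_{m-1} - k_{m-2}}, m^{n_m}}`. -/
def Mprof' (m : ℕ) (n k : ℕ → ℕ) : ℕ → ℕ :=
  fun j => if j = m then n m else Mprof m k j

namespace Stmt14

def HS (l : ℕ → ℕ) (t : ℕ) : ℕ := ∑ j ∈ Finset.Ioc 0 t, l j

lemma HS_eq (l : ℕ → ℕ) (t : ℕ) : ∑ j ∈ Finset.Icc 1 t, l j = HS l t := by
  unfold HS; rw [← Finset.Icc_add_one_left_eq_Ioc, Nat.zero_add]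

lemma mWin_iff (m : ℕ) (k l : ℕ → ℕ) :
    mWin m k l ↔ ∃ i, 1 ≤ i ∧ i ≤ m ∧ k i ≤ HS l i := by
  unfold mWin; simp_rw [HS_eq]

lemma HS_zero (l : ℕ → ℕ) : HS l 0 = 0 := by simp [HS]

lemma HS_succ (l : ℕ → ℕ) (t : ℕ) : HS l (t+1) = HS l t + l (t+1) :=
  Finset.sum_Ioc_succ_top (Nat.zero_le t) l

lemma HS_split (l : ℕ → ℕ) {a b : ℕ} (hab : a ≤ b) :
    HS l b = HS l a + ∑ j ∈ Finset.Ioc a b, l j :=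
  (Finset.sum_Ioc_consecutive l (Nat.zero_le a) hab).symm

lemma chainK (n k : ℕ → ℕ) (c : ℕ)
    (hb : ∀ i, 1 < i → i ≤ c → k i < k (i-1) + n i) :
    ∀ b a, 1 ≤ a → a < b → b ≤ c → k b < k a + ∑ j ∈ Finset.Ioc a b, n j := by
  intro b
  induction b with
  | zero => intro a _ h _; omega
  | succ b ih =>
    intro a ha hab hbc
    have hab' : a ≤ b := Nat.lt_succ_iff.mp hab
    have h1 : k (b+1) < k b + n (b+1) := by
      have := hb (b+1) (by omega) hbc
      simpa using this
    rw [Finset.sum_Ioc_succ_top hab']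
    rcases Nat.eq_or_lt_of_le hab' with h | h
    · subst h; rw [Finset.Ioc_self, Finset.sum_empty]; omega
    · have := ih a ha h (by omega); omega

lemma HS_shift (A : ℕ → ℕ) (i j : ℕ) (hi : 1 ≤ i) (hij : i < j) (hAi : 1 ≤ A i) (t : ℕ) :
    HS (shifted A i j) t + (if i ≤ t then 1 else 0) = HS A t + (if j ≤ t then 1 else 0) := by
  have hj : 1 ≤ j := by omega
  have key : ∀ l, shifted A i j l + (if l = i then 1 else 0)
      = A l + (if l = j then 1 else 0) := by
    intro l
    unfold shifted
    rcases eq_or_ne l i with h1 | h1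
    · rw [h1, if_pos rfl, if_pos rfl, if_neg (Nat.ne_of_lt hij)]; omega
    · simp only [if_neg h1]
      rcases eq_or_ne l j with h2 | h2
      · rw [h2, if_pos rfl, if_pos rfl]
      · simp only [if_neg h2]
  have e1 : ∑ l ∈ Finset.Ioc 0 t, (shifted A i j l + (if l = i then 1 else 0))
      = ∑ l ∈ Finset.Ioc 0 t, (A l + (if l = j then 1 else 0)) :=
    Finset.sum_congr rfl fun l _ => key l
  rw [Finset.sum_add_distrib, Finset.sum_add_distrib, Finset.sum_ite_eq',
    Finset.sum_ite_eq'] at e1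
  have hmem : ∀ x : ℕ, 1 ≤ x → (x ∈ Finset.Ioc 0 t ↔ x ≤ t) := by
    intro x hx; rw [Finset.mem_Ioc]; omega
  rw [if_congr (hmem i hi) rfl rfl, if_congr (hmem j hj) rfl rfl] at e1
  exact e1

lemma HS_bump (Y : ℕ → ℕ) (j0 : ℕ) (hj0 : 1 ≤ j0) (t : ℕ) :
    HS (fun l => if l = j0 then Y l + 1 else Y l) t
      = HS Y t + (if j0 ≤ t then 1 else 0) := by
  have key : ∀ l, (if l = j0 then Y l + 1 else Y l)
      = Y l + (if l = j0 then 1 else 0) := by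
    intro l; by_cases h : l = j0 <;> simp [h]
  have e1 : HS (fun l => if l = j0 then Y l + 1 else Y l) t
      = ∑ l ∈ Finset.Ioc 0 t, (Y l + (if l = j0 then 1 else 0)) :=
    Finset.sum_congr rfl fun l _ => key l
  rw [Finset.sum_add_distrib, Finset.sum_ite_eq'] at e1
  have hmem : (j0 ∈ Finset.Ioc 0 t ↔ j0 ≤ t) := by rw [Finset.mem_Ioc]; omega
  rw [if_congr hmem rfl rfl] at e1
  exact e1

lemma lose_iff (m : ℕ) (k Y : ℕ → ℕ) (h : ¬ mWin m k Y) :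
    ∀ t, 1 ≤ t → t ≤ m → HS Y t < k t := by
  intro t h1 h2
  by_contra hc
  exact h ((mWin_iff m k Y).mpr ⟨t, h1, h2, by omega⟩)

lemma exists_slack (m : ℕ) (n k Y : ℕ → ℕ) (c : ℕ) (hc1 : 1 ≤ c) (hcm : c ≤ m)
    (ha : k 1 ≤ n 1)
    (hb : ∀ i, 1 < i → i ≤ c → k i < k (i-1) + n i)
    (hval : validProfile m n Y)
    (hlose : ∀ t, 1 ≤ t → t ≤ m → HS Y t < k t) :
    ∃ i, 1 ≤ i ∧ i ≤ c ∧ Y i < n i := by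
  by_contra hcon
  push_neg at hcon
  have hall : ∀ i, 1 ≤ i → i ≤ c → Y i = n i := fun i h1 h2 =>
    le_antisymm (hval.1 i h1 (le_trans h2 hcm)) (hcon i h1 h2)
  have h1 : HS Y 1 = n 1 := by
    rw [show (1:ℕ) = 0 + 1 from rfl, HS_succ, HS_zero]
    simpa using hall 1 le_rfl hc1
  rcases Nat.eq_or_lt_of_le hc1 with h | h
  · have := hlose 1 le_rfl (by omega)
    omega
  · have hsplit : HS Y c = HS Y 1 + ∑ j ∈ Finset.Ioc 1 c, Y j := HS_split Y (by omega)
    have hsum : ∑ j ∈ Finset.Ioc 1 c, Y j = ∑ j ∈ Finset.Ioc 1 c, n j :=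
      Finset.sum_congr rfl (by
        intro x hx; rw [Finset.mem_Ioc] at hx; exact hall x (by omega) hx.2)
    have hch := chainK n k c hb c 1 le_rfl h le_rfl
    have := hlose c hc1 hcm
    omega

lemma pushK (m : ℕ) (n k Y : ℕ → ℕ) (c : ℕ) (hcm : c ≤ m)
    (hb : ∀ i, 1 < i → i ≤ c → k i < k (i-1) + n i)
    (hlose : ∀ t, 1 ≤ t → t ≤ m → HS Y t < k t)
    (i s t : ℕ) (hi : 1 ≤ i) (his : i ≤ s) (hst : s ≤ t) (htc : t ≤ c)
    (hmax : ∀ i', i < i' → i' ≤ t → Y i' = n i')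
    (hs : HS Y s + 1 = k s) :
    HS Y t + 1 = k t := by
  rcases Nat.eq_or_lt_of_le hst with h | h
  · subst h; exact hs
  · exfalso
    have hsplit : HS Y t = HS Y s + ∑ j ∈ Finset.Ioc s t, Y j := HS_split Y hst
    have hsum : ∑ j ∈ Finset.Ioc s t, Y j = ∑ j ∈ Finset.Ioc s t, n j :=
      Finset.sum_congr rfl (by
        intro x hx; rw [Finset.mem_Ioc] at hx; exact hmax x (by omega) hx.2)
    have hch := chainK n k c hb t s (by omega) h htc
    have := hlose t (by omega) (by omega)
    omega

lemma max_slack (m : ℕ) (n Y : ℕ → ℕ) (t : ℕ) (htm : t ≤ m)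
    (hval : validProfile m n Y)
    (hex : ∃ i, 1 ≤ i ∧ i ≤ t ∧ Y i < n i) :
    ∃ i, 1 ≤ i ∧ i ≤ t ∧ Y i < n i ∧ ∀ i', i < i' → i' ≤ t → Y i' = n i' := by
  classical
  set F := (Finset.Icc 1 t).filter (fun i => Y i < n i) with hF
  have hFne : F.Nonempty := by
    obtain ⟨i, h1, h2, h3⟩ := hex
    exact ⟨i, Finset.mem_filter.mpr ⟨Finset.mem_Icc.mpr ⟨h1, h2⟩, h3⟩⟩
  set i := F.max' hFne with hi
  have hiF : i ∈ F := F.max'_mem hFne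
  rw [hF, Finset.mem_filter, Finset.mem_Icc] at hiF
  refine ⟨i, hiF.1.1, hiF.1.2, hiF.2, ?_⟩
  intro i' h1' h2'
  by_contra hne
  have hlt : Y i' < n i' := lt_of_le_of_ne (hval.1 i' (by omega) (by omega)) hne
  have hmem : i' ∈ F := Finset.mem_filter.mpr ⟨Finset.mem_Icc.mpr ⟨by omega, h2'⟩, hlt⟩
  have := Finset.le_max' F i' hmem
  omega

lemma unshift_step (m : ℕ) (n k Y : ℕ → ℕ)
    (hnpos : ∀ i, 1 ≤ i → i ≤ m → 0 < n i)
    (hval : validProfile m n Y)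
    (hlose : ∀ t, 1 ≤ t → t ≤ m → HS Y t < k t)
    (hnosh : ¬ ∃ A i j, validProfile m n A ∧ ¬ mWin m k A ∧ 1 ≤ i ∧ i < j ∧ j ≤ m ∧
        1 ≤ A i ∧ A j < n j ∧ Y = shifted A i j)
    (i t : ℕ) (hi : 1 ≤ i) (hit : i ≤ t) (htm : t + 1 ≤ m)
    (hYi : Y i < n i) (hYt1 : 1 ≤ Y (t+1)) :
    ∃ s, i ≤ s ∧ s ≤ t ∧ HS Y s + 1 = k s := by
  classical
  set A : ℕ → ℕ := fun l => if l = i then Y l + 1 else if l = t+1 then Y l - 1 else Y l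
    with hA
  have hine : i ≠ t + 1 := by omega
  have hAi : A i = Y i + 1 := by rw [hA]; simp
  have hAt : A (t+1) = Y (t+1) - 1 := by rw [hA]; simp [Ne.symm hine]
  have hAo : ∀ l, l ≠ i → l ≠ t+1 → A l = Y l := by
    intro l h1 h2; rw [hA]; simp [h1, h2]
  have hYeq : Y = shifted A i (t+1) := by
    funext l
    unfold shifted
    rcases eq_or_ne l i with h1 | h1
    · rw [h1, if_pos rfl, hAi]; omega
    · rw [if_neg h1]
      rcases eq_or_ne l (t+1) with h2 | h2
      · rw [h2, if_pos rfl, hAt]; omega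
      · rw [if_neg h2, hAo l h1 h2]
  have hvalA : validProfile m n A := by
    constructor
    · intro j h1 h2
      rcases eq_or_ne j i with e1 | e1
      · rw [e1, hAi]; omega
      · rcases eq_or_ne j (t+1) with e2 | e2
        · rw [e2, hAt]
          have := hval.1 (t+1) (by omega) htm
          omega
        · rw [hAo j e1 e2]; exact hval.1 j h1 h2
    · intro j hj
      have hz := hval.2 j hj
      have e1 : j ≠ i := by omega
      have e2 : j ≠ t+1 := by omega
      rw [hAo j e1 e2]; exact hz
  have hwinA : mWin m k A := by
    by_contra hnw
    exact hnosh ⟨A, i, t+1, hvalA, hnw, hi, by omega, htm, by omega,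
      by
        rw [hAt]
        have := hval.1 (t+1) (by omega) htm
        have := hnpos (t+1) (by omega) htm
        omega,
      hYeq⟩
  rw [mWin_iff] at hwinA
  obtain ⟨s, hs1, hsm, hks⟩ := hwinA
  have hid := HS_shift A i (t+1) hi (by omega) (by omega) s
  rw [← hYeq] at hid
  have hls := hlose s hs1 hsm
  by_cases c1 : i ≤ s
  · by_cases c2 : t + 1 ≤ s
    · exfalso; rw [if_pos c1, if_pos c2] at hid; omega
    · rw [if_pos c1, if_neg c2] at hid
      exact ⟨s, c1, by omega, by omega⟩
  · exfalso
    rw [if_neg c1, if_neg (show ¬ t+1 ≤ s by omega)] at hid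
    omega

lemma downK (m : ℕ) (n k Y : ℕ → ℕ)
    (hnpos : ∀ i, 1 ≤ i → i ≤ m → 0 < n i)
    (hkmono : ∀ i j, 1 ≤ i → i < j → j ≤ m → k i < k j)
    (ha : k 1 ≤ n 1)
    (c : ℕ) (hc1 : 1 ≤ c) (hcm : c ≤ m)
    (hb : ∀ i, 1 < i → i ≤ c → k i < k (i-1) + n i)
    (hval : validProfile m n Y)
    (hlose : ∀ t, 1 ≤ t → t ≤ m → HS Y t < k t)
    (hnosh : ¬ ∃ A i j, validProfile m n A ∧ ¬ mWin m k A ∧ 1 ≤ i ∧ i < j ∧ j ≤ m ∧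
        1 ≤ A i ∧ A j < n j ∧ Y = shifted A i j)
    (hbase : HS Y c + 1 = k c) :
    ∀ t, 1 ≤ t → t ≤ c → HS Y t + 1 = k t := by
  suffices H : ∀ d t, t + d = c → 1 ≤ t → HS Y t + 1 = k t by
    intro t h1 h2; exact H (c - t) t (by omega) h1
  intro d
  induction d with
  | zero =>
    intro t h1 _
    have : t = c := by omega
    subst this; exact hbase
  | succ d ih =>
    intro t htc h1
    have hIH : HS Y (t+1) + 1 = k (t+1) := ih (t+1) (by omega) (by omega)
    have hYt1 : 1 ≤ Y (t+1) := by
      have h2 := HS_succ Y t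
      have h3 := hlose t h1 (by omega)
      have h4 := hkmono t (t+1) h1 (by omega) (by omega)
      omega
    obtain ⟨i, hi1, hi2, hi3, hmax⟩ := max_slack m n Y t (by omega) hval
      (exists_slack m n k Y t h1 (by omega) ha
        (fun i hx1 hx2 => hb i hx1 (by omega)) hval hlose)
    obtain ⟨s, hs1, hs2, hs3⟩ :=
      unshift_step m n k Y hnpos hval hlose hnosh i t hi1 hi2 (by omega) hi3 hYt1
    exact pushK m n k Y c hcm hb hlose i s t hi1 hs1 hs2 (by omega) hmax hs3

lemma bump_win (m : ℕ) (n k Y : ℕ → ℕ)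
    (hval : validProfile m n Y)
    (hlose : ∀ t, 1 ≤ t → t ≤ m → HS Y t < k t)
    (hmaxwin : ∀ Z, validProfile m n Z → (∀ j, Y j ≤ Z j) → Y ≠ Z → mWin m k Z)
    (j0 : ℕ) (hj1 : 1 ≤ j0) (hjm : j0 ≤ m) (hYj : Y j0 < n j0) :
    ∃ s, j0 ≤ s ∧ s ≤ m ∧ HS Y s + 1 = k s := by
  classical
  set Z : ℕ → ℕ := fun l => if l = j0 then Y l + 1 else Y l with hZ
  have hvalZ : validProfile m n Z := by
    constructor
    · intro j h1 h2
      rcases eq_or_ne j j0 with e | e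
      · subst e; rw [hZ]; simp; omega
      · rw [hZ]; simp only [if_neg e]; exact hval.1 j h1 h2
    · intro j hj
      have e : j ≠ j0 := by omega
      rw [hZ]; simp only [if_neg e]; exact hval.2 j hj
  have hne : Y ≠ Z := by
    intro h
    have := congrFun h j0
    rw [hZ] at this; simp at this
  have hwin := hmaxwin Z hvalZ (fun j => by
    rcases eq_or_ne j j0 with e | e
    · subst e; rw [hZ]; simp
    · rw [hZ]; simp only [if_neg e]; exact le_rfl) hne
  rw [mWin_iff] at hwin
  obtain ⟨s, hs1, hsm, hks⟩ := hwin
  rw [hZ, HS_bump Y j0 hj1 s] at hks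
  have := hlose s hs1 hsm
  by_cases h : j0 ≤ s
  · rw [if_pos h] at hks; exact ⟨s, h, hsm, by omega⟩
  · exfalso; rw [if_neg h] at hks; omega

lemma baseA (m : ℕ) (n k Y : ℕ → ℕ) (hm : 2 ≤ m)
    (ha : k 1 ≤ n 1)
    (hb_m : ∀ i, 1 < i → i ≤ m → k i < k (i-1) + n i)
    (hval : validProfile m n Y)
    (hlose : ∀ t, 1 ≤ t → t ≤ m → HS Y t < k t)
    (hmaxwin : ∀ Z, validProfile m n Z → (∀ j, Y j ≤ Z j) → Y ≠ Z → mWin m k Z) :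
    HS Y m + 1 = k m := by
  obtain ⟨i, hi1, hi2, hi3, hmax⟩ := max_slack m n Y m le_rfl hval
    (exists_slack m n k Y m (by omega) le_rfl ha hb_m hval hlose)
  obtain ⟨s, hs1, hs2, hs3⟩ := bump_win m n k Y hval hlose hmaxwin i hi1 hi2 hi3
  exact pushK m n k Y m le_rfl hb_m hlose i s m hi1 hs1 hs2 le_rfl hmax hs3

lemma baseB_Ym (m : ℕ) (n k Y : ℕ → ℕ) (hm : 2 ≤ m)
    (hB : k (m-1) + n m ≤ k m)
    (hval : validProfile m n Y)
    (hlose : ∀ t, 1 ≤ t → t ≤ m → HS Y t < k t)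
    (hmaxwin : ∀ Z, validProfile m n Z → (∀ j, Y j ≤ Z j) → Y ≠ Z → mWin m k Z) :
    Y m = n m := by
  by_contra hne
  have hYm : Y m < n m := lt_of_le_of_ne (hval.1 m (by omega) le_rfl) hne
  obtain ⟨s, hs1, hs2, hs3⟩ := bump_win m n k Y hval hlose hmaxwin m (by omega) le_rfl hYm
  have hsm : s = m := le_antisymm hs2 hs1
  subst hsm
  have hsp : HS Y s = HS Y (s-1) + Y s := by
    have h : s - 1 + 1 = s := by omega
    conv_lhs => rw [← h]
    rw [HS_succ, h]
  have hl := hlose (s-1) (by omega) (by omega)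
  omega

lemma baseB (m : ℕ) (n k Y : ℕ → ℕ) (hm : 2 ≤ m)
    (ha : k 1 ≤ n 1)
    (hb : ∀ i, 1 < i → i < m → k i < k (i-1) + n i)
    (hB : k (m-1) + n m ≤ k m)
    (hval : validProfile m n Y)
    (hlose : ∀ t, 1 ≤ t → t ≤ m → HS Y t < k t)
    (hmaxwin : ∀ Z, validProfile m n Z → (∀ j, Y j ≤ Z j) → Y ≠ Z → mWin m k Z) :
    HS Y (m-1) + 1 = k (m-1) := by
  have hYm : Y m = n m := baseB_Ym m n k Y hm hB hval hlose hmaxwin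
  have hb' : ∀ i, 1 < i → i ≤ m-1 → k i < k (i-1) + n i :=
    fun i h1 h2 => hb i h1 (by omega)
  obtain ⟨i, hi1, hi2, hi3, hmax⟩ := max_slack m n Y (m-1) (by omega) hval
    (exists_slack m n k Y (m-1) (by omega) (by omega) ha hb' hval hlose)
  obtain ⟨s, hs1, hs2, hs3⟩ := bump_win m n k Y hval hlose hmaxwin i hi1 (by omega) hi3
  rcases Nat.eq_or_lt_of_le hs2 with h | h
  · subst h
    have hsp : HS Y s = HS Y (s-1) + Y s := by
      have h : s - 1 + 1 = s := by omega
      conv_lhs => rw [← h]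
      rw [HS_succ, h]
    have hl := hlose (s-1) (by omega) (by omega)
    omega
  · exact pushK m n k Y (m-1) (by omega) hb' hlose i s (m-1) hi1 hs1 (by omega)
      le_rfl hmax hs3

lemma Mprof_one (m : ℕ) (k : ℕ → ℕ) : Mprof m k 1 = k 1 - 1 := by
  unfold Mprof; rw [if_pos rfl]

lemma Mprof_mid (m : ℕ) (k : ℕ → ℕ) (j : ℕ) (h1 : 1 < j) (h2 : j ≤ m) :
    Mprof m k j = k j - k (j-1) := by
  unfold Mprof; rw [if_neg (by omega), if_pos ⟨h1, h2⟩]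

lemma Mprof_out (m : ℕ) (k : ℕ → ℕ) (j : ℕ) (hm : 1 ≤ m) (h : j = 0 ∨ m < j) : Mprof m k j = 0 := by
  unfold Mprof; rw [if_neg (by omega), if_neg (by omega)]

lemma HS_M (m : ℕ) (k : ℕ → ℕ)
    (hkpos : ∀ i, 1 ≤ i → i ≤ m → 0 < k i)
    (hkmono : ∀ i j, 1 ≤ i → i < j → j ≤ m → k i < k j) :
    ∀ t, 1 ≤ t → t ≤ m → HS (Mprof m k) t + 1 = k t := by
  intro t
  induction t with
  | zero => intro h; exact absurd h (by omega)
  | succ t ih =>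
    intro _ htm
    rcases Nat.eq_zero_or_pos t with h | h
    · subst h
      rw [HS_succ, HS_zero, Mprof_one]
      have := hkpos 1 le_rfl (by omega)
      simp only [Nat.zero_add]
      omega
    · have hIH := ih h (by omega)
      rw [HS_succ, Mprof_mid m k (t+1) (by omega) htm]
      have := hkmono t (t+1) h (by omega) htm
      simp only [Nat.add_sub_cancel]
      omega

lemma Mprof'_lt (m : ℕ) (n k : ℕ → ℕ) (j : ℕ) (h : j ≠ m) :
    Mprof' m n k j = Mprof m k j := by
  unfold Mprof'; rw [if_neg h]

lemma Mprof'_m (m : ℕ) (n k : ℕ → ℕ) : Mprof' m n k m = n m := by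
  unfold Mprof'; rw [if_pos rfl]

lemma HS_M'_lt (m : ℕ) (n k : ℕ → ℕ) (t : ℕ) (ht : t < m) :
    HS (Mprof' m n k) t = HS (Mprof m k) t :=
  Finset.sum_congr rfl (fun x hx => by
    rw [Finset.mem_Ioc] at hx
    exact Mprof'_lt m n k x (by omega))

lemma existsA (m : ℕ) (n k : ℕ → ℕ) (hm : 2 ≤ m)
    (hkpos : ∀ i, 1 ≤ i → i ≤ m → 0 < k i)
    (hkmono : ∀ i j, 1 ≤ i → i < j → j ≤ m → k i < k j)
    (ha : k 1 ≤ n 1)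
    (hb_m : ∀ i, 1 < i → i ≤ m → k i < k (i-1) + n i) :
    shiftMaxLosing m n (mWin m k) (Mprof m k) := by
  have hSM := HS_M m k hkpos hkmono
  refine ⟨⟨?_, ?_⟩, ?_, ?_, ?_⟩
  · intro j h1 h2
    rcases Nat.eq_or_lt_of_le h1 with h | h
    · rw [← h, Mprof_one]; omega
    · rw [Mprof_mid m k j h h2]
      have := hb_m j h h2
      omega
  · intro j hj; exact Mprof_out m k j (by omega) hj
  · rw [mWin_iff]
    rintro ⟨i, h1, h2, h3⟩
    have := hSM i h1 h2; omega
  · intro Z hvalZ hle hne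
    obtain ⟨j0, hj0⟩ := Function.ne_iff.mp hne
    have hj0m : 1 ≤ j0 ∧ j0 ≤ m := by
      by_contra hc
      exact hj0 (by rw [Mprof_out m k j0 (by omega) (by omega), hvalZ.2 j0 (by omega)])
    have hj0lt : Mprof m k j0 < Z j0 := lt_of_le_of_ne (hle j0) hj0
    rw [mWin_iff]
    refine ⟨m, by omega, le_rfl, ?_⟩
    have hlt : HS (Mprof m k) m < HS Z m :=
      Finset.sum_lt_sum (fun x _ => hle x)
        ⟨j0, Finset.mem_Ioc.mpr ⟨by omega, hj0m.2⟩, hj0lt⟩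
    have := hSM m (by omega) le_rfl
    omega
  · rintro ⟨A, i, j, hvalA, hnw, hi, hij, hjm, hAi, hAj, heq⟩
    have hid := HS_shift A i j hi hij hAi i
    rw [← heq, if_pos le_rfl, if_neg (by omega)] at hid
    have := hSM i hi (by omega)
    exact hnw ((mWin_iff m k A).mpr ⟨i, hi, by omega, by omega⟩)

lemma existsB (m : ℕ) (n k : ℕ → ℕ) (hm : 2 ≤ m)
    (hnpos : ∀ i, 1 ≤ i → i ≤ m → 0 < n i)
    (hkpos : ∀ i, 1 ≤ i → i ≤ m → 0 < k i)
    (hkmono : ∀ i j, 1 ≤ i → i < j → j ≤ m → k i < k j)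
    (ha : k 1 ≤ n 1)
    (hb : ∀ i, 1 < i → i < m → k i < k (i-1) + n i)
    (hB : k (m-1) + n m ≤ k m) :
    shiftMaxLosing m n (mWin m k) (Mprof' m n k) := by
  have hSM := HS_M m k hkpos hkmono
  have hSm1 : HS (Mprof' m n k) (m-1) + 1 = k (m-1) := by
    rw [HS_M'_lt m n k (m-1) (by omega)]
    exact hSM (m-1) (by omega) (by omega)
  have hSm : HS (Mprof' m n k) m = HS (Mprof' m n k) (m-1) + n m := by
    have h : m - 1 + 1 = m := by omega
    conv_lhs => rw [← h]
    rw [HS_succ, h, Mprof'_m]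
  refine ⟨⟨?_, ?_⟩, ?_, ?_, ?_⟩
  · intro j h1 h2
    rcases eq_or_ne j m with e | e
    · rw [e, Mprof'_m]
    · rw [Mprof'_lt m n k j e]
      rcases Nat.eq_or_lt_of_le h1 with h | h
      · rw [← h, Mprof_one]; omega
      · rw [Mprof_mid m k j h h2]
        have := hb j h (by omega)
        omega
  · intro j hj
    rw [Mprof'_lt m n k j (by omega)]
    exact Mprof_out m k j (by omega) (by omega)
  · rw [mWin_iff]
    rintro ⟨i, h1, h2, h3⟩
    rcases eq_or_ne i m with e | e
    · subst e
      rw [hSm] at h3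
      omega
    · rw [HS_M'_lt m n k i (by omega)] at h3
      have := hSM i h1 h2
      omega
  · intro Z hvalZ hle hne
    obtain ⟨j0, hj0⟩ := Function.ne_iff.mp hne
    have hj0m : 1 ≤ j0 ∧ j0 ≤ m := by
      by_contra hc
      refine hj0 ?_
      rw [hvalZ.2 j0 (by omega), Mprof'_lt m n k j0 (by omega), Mprof_out m k j0 (by omega) (by omega)]
    have hj0lt : Mprof' m n k j0 < Z j0 := lt_of_le_of_ne (hle j0) hj0
    have hj0ne : j0 ≠ m := by
      intro e
      rw [e, Mprof'_m] at hj0lt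
      have := hvalZ.1 m (by omega) le_rfl
      omega
    rw [mWin_iff]
    refine ⟨m-1, by omega, by omega, ?_⟩
    have hlt : HS (Mprof' m n k) (m-1) < HS Z (m-1) :=
      Finset.sum_lt_sum (fun x _ => hle x)
        ⟨j0, Finset.mem_Ioc.mpr ⟨by omega, by omega⟩, hj0lt⟩
    omega
  · rintro ⟨A, i, j, hvalA, hnw, hi, hij, hjm, hAi, hAj, heq⟩
    have hid := HS_shift A i j hi hij hAi i
    rw [← heq, if_pos le_rfl, if_neg (by omega)] at hid
    rw [HS_M'_lt m n k i (by omega)] at hid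
    have := hSM i hi (by omega)
    exact hnw ((mWin_iff m k A).mpr ⟨i, hi, by omega, by omega⟩)

lemma HS_one (Y : ℕ → ℕ) : HS Y 1 = Y 1 := by
  unfold HS
  rw [← Finset.Icc_add_one_left_eq_Ioc, Nat.zero_add, Finset.Icc_self, Finset.sum_singleton]

lemma HS_pred (Y : ℕ → ℕ) (j : ℕ) (h : 1 ≤ j) : HS Y j = HS Y (j-1) + Y j := by
  have e : j - 1 + 1 = j := by omega
  conv_lhs => rw [← e]
  rw [HS_succ, e]

lemma uniqueA (m : ℕ) (n k Y : ℕ → ℕ) (hm : 2 ≤ m)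
    (hnpos : ∀ i, 1 ≤ i → i ≤ m → 0 < n i)
    (hkmono : ∀ i j, 1 ≤ i → i < j → j ≤ m → k i < k j)
    (ha : k 1 ≤ n 1)
    (hb_m : ∀ i, 1 < i → i ≤ m → k i < k (i-1) + n i)
    (hY : shiftMaxLosing m n (mWin m k) Y) :
    Y = Mprof m k := by
  obtain ⟨hval, hnw, hmaxwin, hnosh⟩ := hY
  have hlose := lose_iff m k Y hnw
  have hbase := baseA m n k Y hm ha hb_m hval hlose hmaxwin
  have hsums := downK m n k Y hnpos hkmono ha m (by omega) le_rfl hb_m hval hlose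
    hnosh hbase
  funext j
  rcases Nat.eq_zero_or_pos j with h0 | h0
  · rw [hval.2 j (Or.inl h0), Mprof_out m k j (by omega) (Or.inl h0)]
  rcases le_or_gt j m with hjm | hjm
  · rcases Nat.eq_or_lt_of_le (show (1:ℕ) ≤ j from h0) with h1 | h1
    · subst h1
      have hs1 := hsums 1 le_rfl (by omega)
      rw [HS_one] at hs1
      rw [Mprof_one]
      omega
    · have hsp := HS_pred Y j (by omega)
      have h1s := hsums (j-1) (by omega) (by omega)
      have h2s := hsums j h0 hjm
      rw [Mprof_mid m k j h1 hjm]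
      omega
  · rw [hval.2 j (Or.inr hjm), Mprof_out m k j (by omega) (Or.inr hjm)]

lemma uniqueB (m : ℕ) (n k Y : ℕ → ℕ) (hm : 2 ≤ m)
    (hnpos : ∀ i, 1 ≤ i → i ≤ m → 0 < n i)
    (hkmono : ∀ i j, 1 ≤ i → i < j → j ≤ m → k i < k j)
    (ha : k 1 ≤ n 1)
    (hb : ∀ i, 1 < i → i < m → k i < k (i-1) + n i)
    (hB : k (m-1) + n m ≤ k m)
    (hY : shiftMaxLosing m n (mWin m k) Y) :
    Y = Mprof' m n k := by
  obtain ⟨hval, hnw, hmaxwin, hnosh⟩ := hY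
  have hlose := lose_iff m k Y hnw
  have hb' : ∀ i, 1 < i → i ≤ m-1 → k i < k (i-1) + n i :=
    fun i h1 h2 => hb i h1 (by omega)
  have hYm : Y m = n m := baseB_Ym m n k Y hm hB hval hlose hmaxwin
  have hbase := baseB m n k Y hm ha hb hB hval hlose hmaxwin
  have hsums := downK m n k Y hnpos hkmono ha (m-1) (by omega) (by omega) hb' hval
    hlose hnosh hbase
  funext j
  rcases eq_or_ne j m with e | e
  · rw [e, Mprof'_m, hYm]
  rw [Mprof'_lt m n k j e]
  rcases Nat.eq_zero_or_pos j with h0 | h0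
  · rw [hval.2 j (Or.inl h0), Mprof_out m k j (by omega) (Or.inl h0)]
  rcases le_or_gt j m with hjm | hjm
  · have hjm' : j ≤ m - 1 := by omega
    rcases Nat.eq_or_lt_of_le (show (1:ℕ) ≤ j from h0) with h1 | h1
    · subst h1
      have hs1 := hsums 1 le_rfl (by omega)
      rw [HS_one] at hs1
      rw [Mprof_one]
      omega
    · have hsp := HS_pred Y j (by omega)
      have h1s := hsums (j-1) (by omega) (by omega)
      have h2s := hsums j h0 hjm'
      rw [Mprof_mid m k j h1 hjm]
      omega
  · rw [hval.2 j (Or.inr hjm), Mprof_out m k j (by omega) (Or.inr hjm)]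

end Stmt14

/-- every canonical disjunctive hierarchical game `H_∃(n,k)`
(so `k_1 ≤ n_1` and `k_i < k_{i-1} + n_i` for `1 < i < m`) has exactly one
shift-maximal losing submultiset, namely `M` when `k_m < k_{m-1} + n_m` and
`M'` when `k_m ≥ k_{m-1} + n_m`. -/
theorem stmt_14 (m : ℕ) (hm : 2 ≤ m) (n k : ℕ → ℕ)
    (hnpos : ∀ i, 1 ≤ i → i ≤ m → 0 < n i)
    (hkpos : ∀ i, 1 ≤ i → i ≤ m → 0 < k i)
    (hkmono : ∀ i j, 1 ≤ i → i < j → j ≤ m → k i < k j)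
    (ha : k 1 ≤ n 1)
    (hb : ∀ i, 1 < i → i < m → k i < k (i - 1) + n i) :
    (k m < k (m - 1) + n m →
      shiftMaxLosing m n (mWin m k) (Mprof m k) ∧
        ∀ Y, shiftMaxLosing m n (mWin m k) Y → Y = Mprof m k) ∧
    (k (m - 1) + n m ≤ k m →
      shiftMaxLosing m n (mWin m k) (Mprof' m n k) ∧
        ∀ Y, shiftMaxLosing m n (mWin m k) Y → Y = Mprof' m n k) := by
  constructor
  · intro hA
    have hb_m : ∀ i, 1 < i → i ≤ m → k i < k (i-1) + n i := by
      intro i h1 h2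
      rcases Nat.eq_or_lt_of_le h2 with h | h
      · rw [h]; exact hA
      · exact hb i h1 h
    exact ⟨Stmt14.existsA m n k hm hkpos hkmono ha hb_m,
      fun Y hY => Stmt14.uniqueA m n k Y hm hnpos hkmono ha hb_m hY⟩
  · intro hB
    exact ⟨Stmt14.existsB m n k hm hnpos hkpos hkmono ha hb hB,
      fun Y hY => Stmt14.uniqueB m n k Y hm hnpos hkmono ha hb hB hY⟩
end

section
/- Every complete simple game on a multiset with a unique shift-maximal losing coalition is a canonical disjunctive hierarchical game: if G is a complete simple game on the multiset P̄={1^{n_1},...,m^{n_m}} with 1 ≻_G 2 ≻_G ... ≻_G m in Isbel's desirability order, and G has exactly one shift-maximal losing submultiset, then there exist positive integers k_1<k_2<...<k_m such that G = H_∃(n,k). -/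
/-- The profile `l` with one extra copy of level `i`. -/
def addOne (l : ℕ → ℕ) (i : ℕ) : ℕ → ℕ :=
  fun j => if j = i then l i + 1 else l j

/-- Isbel's desirability relation on levels: `i ≽ j` iff for every submultiset
`X` with the multiplicities of `i` and `j` below capacity, `X` plus one copy of
`j` winning implies `X` plus one copy of `i` winning. -/
def levelGE (m : ℕ) (n : ℕ → ℕ) (W : (ℕ → ℕ) → Prop) (i j : ℕ) : Prop :=
  ∀ l, validProfile m n l → l i < n i → l j < n j → W (addOne l j) → W (addOne l i)

/-- Partial sum `l 1 + ... + l t`. -/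
def pS (l : ℕ → ℕ) (t : ℕ) : ℕ := ∑ j ∈ Finset.Icc 1 t, l j

lemma pS_zero (l : ℕ → ℕ) : pS l 0 = 0 := by simp [pS]

lemma pS_succ (l : ℕ → ℕ) (t : ℕ) : pS l (t + 1) = pS l t + l (t + 1) :=
  Finset.sum_Icc_succ_top (by omega) l

lemma pS_mono_idx (l : ℕ → ℕ) {t t' : ℕ} (h : t ≤ t') : pS l t ≤ pS l t' :=
  Finset.sum_le_sum_of_subset (Finset.Icc_subset_Icc le_rfl h)

lemma pS_le_of_le {a b : ℕ → ℕ} (h : ∀ j, a j ≤ b j) (t : ℕ) : pS a t ≤ pS b t :=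
  Finset.sum_le_sum fun j _ => h j

lemma pS_addOne (l : ℕ → ℕ) (c t : ℕ) :
    pS (addOne l c) t = pS l t + (if c ∈ Finset.Icc 1 t then 1 else 0) := by
  unfold pS addOne
  have h : ∀ u ∈ Finset.Icc 1 t, (if u = c then l c + 1 else l u)
      = l u + (if u = c then 1 else 0) := by
    intro u _
    rcases eq_or_ne u c with h1 | h1
    · subst h1; rw [if_pos rfl, if_pos rfl]
    · rw [if_neg h1, if_neg h1]; omega
  rw [Finset.sum_congr rfl h, Finset.sum_add_distrib,
    Finset.sum_ite_eq' (Finset.Icc 1 t) c (fun _ => 1)]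

lemma pS_shifted {A : ℕ → ℕ} {i j : ℕ} (hij : i ≠ j) (hAi : 1 ≤ A i) (t : ℕ) :
    pS (shifted A i j) t + (if i ∈ Finset.Icc 1 t then 1 else 0)
      = pS A t + (if j ∈ Finset.Icc 1 t then 1 else 0) := by
  unfold pS shifted
  have h : ∀ u ∈ Finset.Icc 1 t,
      (if u = i then A i - 1 else if u = j then A j + 1 else A u)
        + (if u = i then 1 else 0) = A u + (if u = j then 1 else 0) := by
    intro u _
    rcases eq_or_ne u i with h1 | h1
    · subst h1; rw [if_pos rfl, if_pos rfl, if_neg hij]; omega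
    · rw [if_neg h1, if_neg h1]
      rcases eq_or_ne u j with h2 | h2
      · subst h2; rw [if_pos rfl, if_pos rfl]
      · rw [if_neg h2, if_neg h2]
  have e1 := Finset.sum_congr rfl h
  rw [Finset.sum_add_distrib, Finset.sum_add_distrib,
    Finset.sum_ite_eq' (Finset.Icc 1 t) i (fun _ => 1),
    Finset.sum_ite_eq' (Finset.Icc 1 t) j (fun _ => 1)] at e1
  exact e1

/-- The profile with one copy at level `c` removed. -/
def delOne (l : ℕ → ℕ) (c : ℕ) : ℕ → ℕ := fun u => if u = c then l c - 1 else l u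

lemma pS_delOne {l : ℕ → ℕ} {c : ℕ} (hc : 1 ≤ l c) (t : ℕ) :
    pS (delOne l c) t + (if c ∈ Finset.Icc 1 t then 1 else 0) = pS l t := by
  unfold pS delOne
  have h : ∀ u ∈ Finset.Icc 1 t,
      (if u = c then l c - 1 else l u) + (if u = c then 1 else 0) = l u := by
    intro u _
    rcases eq_or_ne u c with h1 | h1
    · subst h1; rw [if_pos rfl, if_pos rfl]; omega
    · rw [if_neg h1, if_neg h1]; omega
  have e1 := Finset.sum_congr rfl h
  rw [Finset.sum_add_distrib, Finset.sum_ite_eq' (Finset.Icc 1 t) c (fun _ => 1)] at e1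
  exact e1

lemma delOne_le (l : ℕ → ℕ) (c : ℕ) : ∀ u, delOne l c u ≤ l u := by
  intro u; unfold delOne
  rcases eq_or_ne u c with h1 | h1
  · subst h1; rw [if_pos rfl]; omega
  · rw [if_neg h1]

lemma addOne_delOne {l : ℕ → ℕ} {c : ℕ} (hc : 1 ≤ l c) : addOne (delOne l c) c = l := by
  funext u; unfold addOne delOne
  rcases eq_or_ne u c with h1 | h1
  · subst h1; rw [if_pos rfl, if_pos rfl]; omega
  · rw [if_neg h1, if_neg h1]

lemma addOne_delOne_shift {l : ℕ → ℕ} {i j : ℕ} (hij : i ≠ j) :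
    addOne (delOne l i) j = shifted l i j := by
  funext u; unfold addOne delOne shifted
  rcases eq_or_ne u i with h1 | h1
  · subst h1; rw [if_neg hij, if_pos rfl, if_pos rfl]
  · rcases eq_or_ne u j with h2 | h2
    · subst h2; rw [if_pos rfl, if_neg h1, if_pos rfl, if_neg (Ne.symm hij)]
    · rw [if_neg h2, if_neg h1, if_neg h1, if_neg h2]

lemma valid_of_le {m : ℕ} {n a b : ℕ → ℕ} (hb : validProfile m n b)
    (hab : ∀ u, a u ≤ b u) : validProfile m n a :=
  ⟨fun j h1 h2 => le_trans (hab j) (hb.1 j h1 h2),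
   fun j hj => Nat.le_zero.mp (le_trans (hab j) (le_of_eq (hb.2 j hj)))⟩

/-- Useful corollaries of `pS_shifted`. -/
lemma pS_shifted_le {A : ℕ → ℕ} {i j : ℕ} (hi1 : 1 ≤ i) (hij : i < j) (hAi : 1 ≤ A i)
    (t : ℕ) : pS (shifted A i j) t ≤ pS A t := by
  have h := pS_shifted (Nat.ne_of_lt hij) hAi t
  simp only [Finset.mem_Icc] at h
  split_ifs at h <;> omega

lemma pS_shifted_eq_sub {A : ℕ → ℕ} {i j : ℕ} (hi1 : 1 ≤ i) (hij : i < j) (hAi : 1 ≤ A i)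
    {t : ℕ} (hit : i ≤ t) (htj : t < j) : pS (shifted A i j) t + 1 = pS A t := by
  have h := pS_shifted (Nat.ne_of_lt hij) hAi t
  simp only [Finset.mem_Icc] at h
  split_ifs at h <;> omega

lemma pS_shifted_eq {A : ℕ → ℕ} {i j : ℕ} (hi1 : 1 ≤ i) (hij : i < j) (hAi : 1 ≤ A i)
    {t : ℕ} (h' : t < i ∨ j ≤ t) : pS (shifted A i j) t = pS A t := by
  have h := pS_shifted (Nat.ne_of_lt hij) hAi t
  simp only [Finset.mem_Icc] at h
  split_ifs at h <;> omega

lemma pS_eq_of_zero {f : ℕ → ℕ} : ∀ b a, a ≤ b → (∀ t, a < t → t ≤ b → f t = 0) →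
    pS f b = pS f a := by
  intro b
  induction b with
  | zero => intro a ha _; rw [Nat.le_zero.mp ha]
  | succ b ih =>
    intro a hab h
    rcases Nat.eq_or_lt_of_le hab with h1 | h1
    · rw [h1]
    · have hab' : a ≤ b := by omega
      rw [pS_succ, h (b+1) (by omega) le_rfl, ih a hab' (fun t h1 h2 => h t h1 (by omega))]; omega

/-- Weight of a profile. -/
def wT (m : ℕ) (l : ℕ → ℕ) : ℕ := ∑ u ∈ Finset.Icc 1 m, u * l u

lemma wT_shifted {A : ℕ → ℕ} {i j : ℕ} (m : ℕ) (hij : i ≠ j) (hAi : 1 ≤ A i) :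
    wT m (shifted A i j) + (if i ∈ Finset.Icc 1 m then i else 0)
      = wT m A + (if j ∈ Finset.Icc 1 m then j else 0) := by
  unfold wT shifted
  have h : ∀ u ∈ Finset.Icc 1 m,
      u * (if u = i then A i - 1 else if u = j then A j + 1 else A u)
        + (if u = i then u else 0) = u * A u + (if u = j then u else 0) := by
    intro u _
    rcases eq_or_ne u i with h1 | h1
    · subst h1; rw [if_pos rfl, if_pos rfl, if_neg hij]
      obtain ⟨c, hc⟩ : ∃ c, A u = c + 1 := ⟨A u - 1, by omega⟩
      rw [hc]
      have hc1 : c + 1 - 1 = c := rfl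
      rw [hc1]; ring
    · rw [if_neg h1, if_neg h1]
      rcases eq_or_ne u j with h2 | h2
      · subst h2; rw [if_pos rfl, if_pos rfl]; ring
      · rw [if_neg h2, if_neg h2]
  have e1 := Finset.sum_congr rfl h
  rw [Finset.sum_add_distrib, Finset.sum_add_distrib,
    Finset.sum_ite_eq' (Finset.Icc 1 m) i (fun u => u),
    Finset.sum_ite_eq' (Finset.Icc 1 m) j (fun u => u)] at e1
  exact e1

/-- Every losing valid profile is dominated (in all partial sums) by the unique
shift-maximal losing profile `Y`. -/
lemma losing_le (m : ℕ) (n : ℕ → ℕ) (W : (ℕ → ℕ) → Prop)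
    (Y : ℕ → ℕ) (huY : ∀ Z, shiftMaxLosing m n W Z → Z = Y) :
    ∀ l, validProfile m n l → ¬ W l → ∀ t, 1 ≤ t → t ≤ m → pS l t ≤ pS Y t := by
  set N := pS n m with hN
  set B := m * N + 1 with hB
  set μ : (ℕ → ℕ) → ℕ := fun l => (N - pS l m) * B + wT m l with hμ
  have hSN : ∀ l, validProfile m n l → pS l m ≤ N := by
    intro l hv
    exact Finset.sum_le_sum fun u hu =>
      hv.1 u (Finset.mem_Icc.mp hu).1 (Finset.mem_Icc.mp hu).2
  have hwB : ∀ l, validProfile m n l → wT m l ≤ m * N := by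
    intro l hv
    calc wT m l ≤ ∑ u ∈ Finset.Icc 1 m, m * n u := Finset.sum_le_sum fun u hu =>
          Nat.mul_le_mul (Finset.mem_Icc.mp hu).2
            (hv.1 u (Finset.mem_Icc.mp hu).1 (Finset.mem_Icc.mp hu).2)
      _ = m * N := (Finset.mul_sum _ _ _).symm
  suffices H : ∀ μ0 l, μ l ≤ μ0 → validProfile m n l → ¬ W l →
      ∀ t, 1 ≤ t → t ≤ m → pS l t ≤ pS Y t by
    exact fun l hv hw => H (μ l) l le_rfl hv hw
  intro μ0
  induction μ0 using Nat.strong_induction_on with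
  | _ μ0 ih =>
    intro l hμl hv hw t ht1 htm
    by_cases h2 : ∃ A i j, validProfile m n A ∧ ¬ W A ∧ 1 ≤ i ∧ i < j ∧ j ≤ m ∧
        1 ≤ A i ∧ A j < n j ∧ l = shifted A i j
    · obtain ⟨A, i, j, hAv, hAw, hi1, hij, hjm, hAi, hAj, hlA⟩ := h2
      have hle : ∀ t', pS l t' ≤ pS A t' := by
        intro t'; rw [hlA]; exact pS_shifted_le hi1 hij hAi t'
      have htot : pS l m = pS A m := by
        rw [hlA]; exact pS_shifted_eq hi1 hij hAi (Or.inr hjm)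
      have hwlt : wT m A < wT m l := by
        have h := wT_shifted m (Nat.ne_of_lt hij) hAi
        rw [← hlA] at h
        rw [if_pos (Finset.mem_Icc.mpr ⟨hi1, by omega⟩),
          if_pos (Finset.mem_Icc.mpr ⟨by omega, hjm⟩)] at h
        omega
      have hμA : μ A < μ l := by
        show (N - pS A m) * B + wT m A < (N - pS l m) * B + wT m l
        rw [htot]
        exact Nat.add_lt_add_left hwlt _
      exact le_trans (hle t)
        (ih (μ A) (lt_of_lt_of_le hμA hμl) A le_rfl hAv hAw t ht1 htm)
    · by_cases h1 : ∀ Z, validProfile m n Z → (∀ u, l u ≤ Z u) → l ≠ Z → W Z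
      · have heq : l = Y := huY l ⟨hv, hw, h1, h2⟩
        rw [heq]
      · push_neg at h1
        obtain ⟨Z, hZv, hlZ, hlneZ, hZw⟩ := h1
        have hlt : pS l m < pS Z m := by
          have hu : ∃ u, l u < Z u := by
            by_contra hcon; push_neg at hcon
            exact hlneZ (funext fun u => le_antisymm (hlZ u) (hcon u))
          obtain ⟨u, hu⟩ := hu
          have hum : u ∈ Finset.Icc 1 m := by
            rw [Finset.mem_Icc]
            by_contra hc
            have h0l : l u = 0 := hv.2 u (by omega)
            have h0Z : Z u = 0 := hZv.2 u (by omega)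
            omega
          exact Finset.sum_lt_sum (fun v _ => hlZ v) ⟨u, hum, hu⟩
        have hμZ : μ Z < μ l := by
          have h1' := hSN Z hZv
          have h2' := hwB Z hZv
          have hab : N - pS Z m + 1 ≤ N - pS l m := by omega
          calc μ Z = (N - pS Z m) * B + wT m Z := rfl
            _ < (N - pS Z m) * B + B := Nat.add_lt_add_left (by omega) _
            _ = (N - pS Z m + 1) * B := by ring
            _ ≤ (N - pS l m) * B := Nat.mul_le_mul_right B hab
            _ ≤ μ l := Nat.le_add_right _ _
        exact le_trans (pS_le_of_le hlZ t)
          (ih (μ Z) (lt_of_lt_of_le hμZ hμl) Z le_rfl hZv hZw t ht1 htm)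

/-- Every valid profile dominated (in all partial sums) by a losing valid
profile is itself losing. -/
lemma le_losing (m : ℕ) (n : ℕ → ℕ) (W : (ℕ → ℕ) → Prop) (hm : 1 ≤ m)
    (hmono : ∀ A B, validProfile m n A → validProfile m n B →
      (∀ j, A j ≤ B j) → W A → W B)
    (hlev : ∀ i j, 1 ≤ i → i < j → j ≤ m → levelGE m n W i j) :
    ∀ Y' l, validProfile m n Y' → ¬ W Y' → validProfile m n l →
      (∀ t, 1 ≤ t → t ≤ m → pS l t ≤ pS Y' t) → ¬ W l := by
  set D : (ℕ → ℕ) → (ℕ → ℕ) → ℕ :=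
    fun Y' l => ∑ t ∈ Finset.Icc 1 m, (pS Y' t - pS l t) with hD
  suffices H : ∀ D0 Y' l, D Y' l ≤ D0 → validProfile m n Y' → ¬ W Y' →
      validProfile m n l → (∀ t, 1 ≤ t → t ≤ m → pS l t ≤ pS Y' t) → ¬ W l by
    exact fun Y' l h1 h2 h3 h4 => H (D Y' l) Y' l le_rfl h1 h2 h3 h4
  intro D0
  induction D0 using Nat.strong_induction_on with
  | _ D0 ih =>
    intro Y' l hD0 hYv hYw hlv hinv
    by_cases heq : ∀ t, 1 ≤ t → t ≤ m → pS l t = pS Y' t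
    · -- all partial sums agree, so `l = Y'`
      have hEq : l = Y' := by
        funext u
        by_cases hu : 1 ≤ u ∧ u ≤ m
        · obtain ⟨hu1, hu2⟩ := hu
          obtain ⟨v, hv⟩ : ∃ v, u = v + 1 := ⟨u - 1, by omega⟩
          subst hv
          have e1 : pS l (v+1) = pS l v + l (v+1) := pS_succ l v
          have e2 : pS Y' (v+1) = pS Y' v + Y' (v+1) := pS_succ Y' v
          have e3 : pS l (v+1) = pS Y' (v+1) := heq _ hu1 hu2
          have e4 : pS l v = pS Y' v := by
            rcases Nat.eq_zero_or_pos v with h0 | h0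
            · rw [h0, pS_zero, pS_zero]
            · exact heq v h0 (by omega)
          omega
        · rw [hlv.2 u (by omega), hYv.2 u (by omega)]
      rw [hEq]; exact hYw
    · push_neg at heq
      obtain ⟨t1, ht11, ht1m, ht1ne⟩ := heq
      have ht1lt : pS l t1 < pS Y' t1 := lt_of_le_of_ne (hinv t1 ht11 ht1m) ht1ne
      by_cases hcaseA : pS l m < pS Y' m
      · -- Case A : delete an element from `Y'`
        set q := Nat.findGreatest (fun t => pS Y' t = pS l t) m with hq
        have hqP : pS Y' q = pS l q :=
          Nat.findGreatest_spec (P := fun t => pS Y' t = pS l t) (Nat.zero_le m)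
            (by show pS Y' 0 = pS l 0; rw [pS_zero, pS_zero])
        have hqm : q < m := by
          rcases Nat.lt_or_ge q m with h | h
          · exact h
          · exfalso
            have hqm' : q = m := le_antisymm (Nat.findGreatest_le m) h
            rw [hqm'] at hqP; omega
        have hd : ∀ t, q < t → t ≤ m → pS l t < pS Y' t := by
          intro t h1 h2
          have h0 := Nat.findGreatest_is_greatest
            (P := fun t => pS Y' t = pS l t) h1 h2
          have h3 := hinv t (by omega) h2
          omega
        have ht0 : ∃ t0, q < t0 ∧ t0 ≤ m ∧ 1 ≤ Y' t0 := by
          by_contra hcon; push_neg at hcon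
          have hz : ∀ t, q < t → t ≤ m → Y' t = 0 := by
            intro t h1 h2; have := hcon t h1 h2; omega
          have h5 : pS Y' m = pS Y' q := pS_eq_of_zero m q (le_of_lt hqm) hz
          have h4 : pS l q ≤ pS l m := pS_mono_idx l (le_of_lt hqm)
          omega
        obtain ⟨t0, ht0q, ht0m, ht0Y⟩ := ht0
        set Z := delOne Y' t0 with hZ
        have hZle : ∀ u, Z u ≤ Y' u := delOne_le Y' t0
        have hZv : validProfile m n Z := valid_of_le hYv hZle
        have hZw : ¬ W Z := fun h => hYw (hmono Z Y' hZv hYv hZle h)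
        have hZS : ∀ t, pS Z t + (if t0 ≤ t then 1 else 0) = pS Y' t := by
          intro t
          have h := pS_delOne ht0Y t
          rw [← hZ] at h
          simp only [Finset.mem_Icc] at h
          split_ifs at h with h1 <;> split_ifs with h2 <;> omega
        have hinv' : ∀ t, 1 ≤ t → t ≤ m → pS l t ≤ pS Z t := by
          intro t h1 h2
          have h3 := hZS t
          by_cases h4 : t0 ≤ t
          · have h5 := hd t (by omega) h2
            rw [if_pos h4] at h3; omega
          · rw [if_neg h4] at h3
            have h5 := hinv t h1 h2
            omega
        have hDlt : D Z l < D Y' l := by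
          apply Finset.sum_lt_sum
          · intro t _
            show pS Z t - pS l t ≤ pS Y' t - pS l t
            have h3 := hZS t
            split_ifs at h3 <;> omega
          · refine ⟨m, Finset.mem_Icc.mpr ⟨hm, le_rfl⟩, ?_⟩
            show pS Z m - pS l m < pS Y' m - pS l m
            have h3 := hZS m
            rw [if_pos ht0m] at h3
            have h5 := hinv' m hm le_rfl
            omega
        exact ih (D Z l) (lt_of_lt_of_le hDlt hD0) Z l le_rfl hZv hZw hlv hinv'
      · -- Case B : shift within `Y'`
        have hSm : pS l m = pS Y' m := le_antisymm (hinv m hm le_rfl) (by omega)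
        set r := Nat.findGreatest (fun t => pS l t < pS Y' t) m with hr
        have hrP : pS l r < pS Y' r :=
          Nat.findGreatest_spec (P := fun t => pS l t < pS Y' t) ht1m ht1lt
        have hr1 : 1 ≤ r := by
          rcases Nat.eq_zero_or_pos r with h0 | h0
          · rw [h0, pS_zero, pS_zero] at hrP; omega
          · exact h0
        have hrm : r < m := by
          rcases Nat.lt_or_ge r m with h | h
          · exact h
          · exfalso
            have hrm' : r = m := le_antisymm (Nat.findGreatest_le m) h
            rw [hrm'] at hrP; omega
        have hd2 : ∀ t, r < t → t ≤ m → pS Y' t = pS l t := by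
          intro t h1 h2
          have h0 := Nat.findGreatest_is_greatest
            (P := fun t => pS l t < pS Y' t) h1 h2
          have h3 := hinv t (by omega) h2
          omega
        have hjm : r + 1 ≤ m := hrm
        have hYj_eq : pS Y' (r+1) = pS l (r+1) := hd2 (r+1) (by omega) hjm
        have hYjn : Y' (r+1) < n (r+1) := by
          have e2 : pS Y' (r+1) = pS Y' r + Y' (r+1) := pS_succ Y' r
          have e3 : pS l (r+1) = pS l r + l (r+1) := pS_succ l r
          have hln : l (r+1) ≤ n (r+1) := hlv.1 (r+1) (by omega) hjm
          omega
        set q := Nat.findGreatest (fun t => pS Y' t = pS l t) r with hq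
        have hqP : pS Y' q = pS l q :=
          Nat.findGreatest_spec (P := fun t => pS Y' t = pS l t) (Nat.zero_le r)
            (by show pS Y' 0 = pS l 0; rw [pS_zero, pS_zero])
        have hqr : q < r := by
          rcases Nat.lt_or_ge q r with h | h
          · exact h
          · exfalso
            have hqr' : q = r := le_antisymm (Nat.findGreatest_le r) h
            rw [hqr'] at hqP; omega
        have hd3 : ∀ t, q < t → t ≤ r → pS l t < pS Y' t := by
          intro t h1 h2
          have h0 := Nat.findGreatest_is_greatest
            (P := fun t => pS Y' t = pS l t) h1 h2
          have h3 := hinv t (by omega) (by omega)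
          omega
        set i := q + 1 with hi
        have hi1 : 1 ≤ i := by omega
        have hir : i ≤ r := hqr
        have hYi1 : 1 ≤ Y' i := by
          have e4 : pS Y' i = pS Y' q + Y' i := pS_succ Y' q
          have e5 : pS l i = pS l q + l i := pS_succ l q
          have h6 := hd3 i (by omega) hir
          omega
        have hij : i < r + 1 := by omega
        set Z := shifted Y' i (r+1) with hZ
        have hZv : validProfile m n Z := by
          constructor
          · intro u h1 h2
            show (if u = i then Y' i - 1 else if u = r+1 then Y' (r+1) + 1 else Y' u) ≤ n u
            split_ifs with ha hb
            · rw [ha]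
              have h5 := hYv.1 i hi1 (by omega)
              omega
            · rw [hb]
              omega
            · exact hYv.1 u h1 h2
          · intro u hu
            have h0 := hYv.2 u hu
            have hui : u ≠ i := by omega
            have huj : u ≠ r + 1 := by omega
            show (if u = i then Y' i - 1 else if u = r+1 then Y' (r+1) + 1 else Y' u) = 0
            rw [if_neg hui, if_neg huj]
            exact h0
        have hZw : ¬ W Z := by
          set X := delOne Y' i with hX
          have hXv : validProfile m n X := valid_of_le hYv (delOne_le Y' i)
          have hXieq : X i = Y' i - 1 := by rw [hX]; unfold delOne; rw [if_pos rfl]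
          have hXi : X i < n i := by
            have := hYv.1 i hi1 (by omega)
            omega
          have hXjeq : X (r+1) = Y' (r+1) := by
            rw [hX]; unfold delOne; rw [if_neg (by omega : r + 1 ≠ i)]
          have hXj : X (r+1) < n (r+1) := by rw [hXjeq]; exact hYjn
          intro hWZ
          have h1 : W (addOne X (r+1)) := by
            rw [hX, addOne_delOne_shift (show i ≠ r+1 by omega)]
            exact hWZ
          have h2 : W Y' := by
            rw [← addOne_delOne hYi1]
            exact hlev i (r+1) hi1 hij hjm X hXv hXi hXj h1
          exact hYw h2
        have hinv' : ∀ t, 1 ≤ t → t ≤ m → pS l t ≤ pS Z t := by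
          intro t h1 h2
          by_cases h4 : i ≤ t ∧ t ≤ r
          · have h5 := pS_shifted_eq_sub hi1 hij hYi1 h4.1 (by omega)
            have h6 := hd3 t (by omega) h4.2
            rw [hZ]; omega
          · have h7 : t < i ∨ r + 1 ≤ t := by omega
            have h5 := pS_shifted_eq hi1 hij hYi1 h7
            have h6 := hinv t h1 h2
            rw [hZ]; omega
        have hDlt : D Z l < D Y' l := by
          apply Finset.sum_lt_sum
          · intro t _
            show pS Z t - pS l t ≤ pS Y' t - pS l t
            have h3 : pS Z t ≤ pS Y' t := by
              rw [hZ]; exact pS_shifted_le hi1 hij hYi1 t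
            omega
          · refine ⟨r, Finset.mem_Icc.mpr ⟨hr1, by omega⟩, ?_⟩
            show pS Z r - pS l r < pS Y' r - pS l r
            have h3 : pS Z r + 1 = pS Y' r := by
              rw [hZ]; exact pS_shifted_eq_sub hi1 hij hYi1 hir (by omega)
            have h5 := hinv' r hr1 (by omega)
            omega
        exact ih (D Z l) (lt_of_lt_of_le hDlt hD0) Z l le_rfl hZv hZw hlv hinv'

lemma valid_addOne {m : ℕ} {n l : ℕ → ℕ} {c : ℕ} (hlv : validProfile m n l)
    (h1 : 1 ≤ c) (h2 : c ≤ m) (h3 : l c < n c) : validProfile m n (addOne l c) := by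
  constructor
  · intro u hu1 hu2
    unfold addOne
    split_ifs with h
    · rw [h]; omega
    · exact hlv.1 u hu1 hu2
  · intro u hu
    unfold addOne
    split_ifs with h
    · exfalso; omega
    · exact hlv.2 u hu

/-- every complete simple game on the multiset
`P̄ = {1^{n_1}, ..., m^{n_m}}` with `1 ≻ 2 ≻ ... ≻ m` in Isbel's desirability
order having a unique shift-maximal losing submultiset is a canonical
disjunctive hierarchical game: there exist positive integers `k_1 < ... < k_m`
with `G = H_∃(n, k)`. -/
theorem stmt_15 (m : ℕ) (hm : 1 ≤ m) (n : ℕ → ℕ)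
    (hnpos : ∀ i, 1 ≤ i → i ≤ m → 0 < n i)
    (W : (ℕ → ℕ) → Prop)
    (hmono : ∀ A B, validProfile m n A → validProfile m n B →
        (∀ j, A j ≤ B j) → W A → W B)
    (hstrict : ∀ i j, 1 ≤ i → i < j → j ≤ m →
        levelGE m n W i j ∧ ¬ levelGE m n W j i)
    (huniq : ∃! Y, shiftMaxLosing m n W Y) :
    ∃ k : ℕ → ℕ, (∀ i, 1 ≤ i → i ≤ m → 0 < k i) ∧
      (∀ i j, 1 ≤ i → i < j → j ≤ m → k i < k j) ∧
      ∀ l, validProfile m n l → (W l ↔ mWin m k l) := by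
  obtain ⟨Y, hY, huY'⟩ := huniq
  have huY : ∀ Z, shiftMaxLosing m n W Z → Z = Y := fun Z h => huY' Z h
  obtain ⟨hYv, hYw, -, -⟩ := hY
  have hlose := losing_le m n W Y huY
  have hwin := le_losing m n W hm hmono
    (fun i j h1 h2 h3 => (hstrict i j h1 h2 h3).1) Y
  have hchar : ∀ l, validProfile m n l →
      (W l ↔ ∃ i, 1 ≤ i ∧ i ≤ m ∧ pS Y i < pS l i) := by
    intro l hlv
    constructor
    · intro hWl
      by_contra hcon; push_neg at hcon
      exact hwin l hYv hYw hlv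
        (fun t h1 h2 => by have := hcon t h1 h2; omega) hWl
    · rintro ⟨i, h1, h2, h3⟩
      by_contra hWl
      have := hlose l hlv hWl i h1 h2
      omega
  have hYpos : ∀ j, 2 ≤ j → j ≤ m → 1 ≤ Y j := by
    intro j hj2 hjm
    have h1j : 1 ≤ j - 1 := by omega
    have hng := (hstrict (j-1) j h1j (by omega) hjm).2
    unfold levelGE at hng
    push_neg at hng
    obtain ⟨l, hlv, hlj, hli, hWi, hWj⟩ := hng
    have hvj : validProfile m n (addOne l j) := valid_addOne hlv (by omega) hjm hlj
    have hvi : validProfile m n (addOne l (j-1)) :=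
      valid_addOne hlv h1j (by omega) hli
    have hLle := hlose (addOne l j) hvj hWj
    obtain ⟨t, ht1, htm, htlt⟩ := (hchar _ hvi).1 hWi
    have hj' : j - 1 + 1 = j := by omega
    have eYs : pS Y j = pS Y (j-1) + Y j := by
      have h := pS_succ Y (j-1); rwa [hj'] at h
    have els : pS l j = pS l (j-1) + l j := by
      have h := pS_succ l (j-1); rwa [hj'] at h
    have eL : pS (addOne l j) j ≤ pS Y j := hLle j (by omega) hjm
    have eLj : pS (addOne l j) j = pS l j + 1 := by
      rw [pS_addOne, if_pos (Finset.mem_Icc.mpr ⟨by omega, le_rfl⟩)]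
    by_cases hc1 : j ≤ t
    · have eA : pS (addOne l j) t = pS l t + 1 := by
        rw [pS_addOne, if_pos (Finset.mem_Icc.mpr ⟨by omega, hc1⟩)]
      have eB : pS (addOne l (j-1)) t = pS l t + 1 := by
        rw [pS_addOne, if_pos (Finset.mem_Icc.mpr ⟨by omega, by omega⟩)]
      have h5 := hLle t ht1 htm
      omega
    · by_cases hc2 : j - 1 ≤ t
      · have htj : t = j - 1 := by omega
        subst htj
        have eB : pS (addOne l (j-1)) (j-1) = pS l (j-1) + 1 := by
          rw [pS_addOne, if_pos (Finset.mem_Icc.mpr ⟨by omega, le_rfl⟩)]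
        omega
      · have eA : pS (addOne l j) t = pS l t + 0 := by
          rw [pS_addOne, if_neg (show j ∉ Finset.Icc 1 t from by
            simp only [Finset.mem_Icc]; omega)]
        have eB : pS (addOne l (j-1)) t = pS l t + 0 := by
          rw [pS_addOne, if_neg (show j - 1 ∉ Finset.Icc 1 t from by
            simp only [Finset.mem_Icc]; omega)]
        have h5 := hLle t ht1 htm
        omega
  refine ⟨fun i => pS Y i + 1, fun i _ _ => Nat.succ_pos _, ?_, ?_⟩
  · intro i j h1 h2 h3
    have e1 : pS Y (i+1) = pS Y i + Y (i+1) := pS_succ Y i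
    have h4 : 1 ≤ Y (i+1) := hYpos (i+1) (by omega) (by omega)
    have h5 : pS Y (i+1) ≤ pS Y j := pS_mono_idx Y (by omega)
    show pS Y i + 1 < pS Y j + 1
    omega
  · intro l hlv
    rw [hchar l hlv]
    unfold mWin
    constructor
    · rintro ⟨i, h1, h2, h3⟩
      refine ⟨i, h1, h2, ?_⟩
      show pS Y i + 1 ≤ pS l i
      omega
    · rintro ⟨i, h1, h2, h3⟩
      have h3' : pS Y i + 1 ≤ pS l i := h3
      exact ⟨i, h1, h2, by omega⟩
end

section
/- Characterization of weighted disjunctive hierarchical games: let G = H_∃(n,k) be the canonical m-level disjunctive hierarchical game (so k_1 ≤ n_1 and k_i < k_{i-1}+n_i for 1<i<m). Then G is a weighted majority game if and only if one of the following holds: (1) m=1; (2) m=2 and k_2 = k_1+1; (3) m=2 and n_2 = k_2−k_1+1; (4) k_1 = 1 and either m=2, or m=3 and the two-level game with sizes (n_2,n_3) and thresholds (k_2,k_3) satisfies (2) or (3) (i.e. k_3 = k_2+1 or n_3 = k_3−k_2+1); (5) m∈{2,3,4}, k_m ≥ k_{m-1}+n_m, and the (m−1)-level game with sizes (n_1,...,n_{m−1})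 and thresholds (k_1,...,k_{m−1}) falls under one of (1)–(4). -/
/-- The game `W` on `P̄ = {1^{n_1}, ..., m^{n_m}}` is a weighted majority game:
there are nonnegative real weights `w_1, ..., w_m` and a real threshold `q` such
that a submultiset is winning iff its total weight is at least `q`. -/
def mWeighted (m : ℕ) (n : ℕ → ℕ) (W : (ℕ → ℕ) → Prop) : Prop :=
  ∃ (w : ℕ → ℝ) (q : ℝ), (∀ i, 1 ≤ i → i ≤ m → 0 ≤ w i) ∧
    ∀ l, validProfile m n l →
      (W l ↔ q ≤ ∑ i ∈ Finset.Icc 1 m, (l i : ℝ) * w i)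

/-- Conditions (1)-(4) of the Beimel–Tassa–Weinreb characterization for an
`m`-level disjunctive hierarchical game with level sizes `n` and thresholds `k`:
(1) `m = 1`; (2) `m = 2` and `k_2 = k_1 + 1`; (3) `m = 2` and
`n_2 = k_2 - k_1 + 1`; (4) `k_1 = 1` and either `m = 2`, or `m = 3` and the
two-level game with sizes `(n_2, n_3)` and thresholds `(k_2, k_3)` satisfies
(2) or (3). -/
def cond14 (m : ℕ) (n k : ℕ → ℕ) : Prop :=
  m = 1 ∨
    (m = 2 ∧ k 2 = k 1 + 1) ∨
    (m = 2 ∧ n 2 = k 2 - k 1 + 1) ∨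
    (k 1 = 1 ∧ (m = 2 ∨ (m = 3 ∧ (k 3 = k 2 + 1 ∨ n 3 = k 3 - k 2 + 1))))

lemma sum_single (i s x : ℕ) (hs : 1 ≤ s) :
    ∑ j ∈ Finset.Icc 1 i, (if j = s then x else 0) = if s ≤ i then x else 0 := by
  rw [Finset.sum_ite_eq' (Finset.Icc 1 i) s (fun _ => x)]
  simp [hs]

lemma mWin_one (k l : ℕ → ℕ) : mWin 1 k l ↔ k 1 ≤ l 1 := by
  unfold mWin
  constructor
  · rintro ⟨i, h1, h2, h⟩
    interval_cases i <;> simp_all [Finset.Icc_self]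
  · intro h; exact ⟨1, by simp [Finset.Icc_self, h]⟩

lemma mWin_two (k l : ℕ → ℕ) : mWin 2 k l ↔ (k 1 ≤ l 1 ∨ k 2 ≤ l 1 + l 2) := by
  unfold mWin
  constructor
  · rintro ⟨i, h1, h2, h⟩
    interval_cases i <;> simp_all [Finset.sum_Icc_succ_top, Finset.Icc_self]
  · rintro (h | h)
    · exact ⟨1, by simp [Finset.Icc_self, h]⟩
    · exact ⟨2, by simp [Finset.sum_Icc_succ_top, Finset.Icc_self]; omega⟩

lemma mWin_three (k l : ℕ → ℕ) :
    mWin 3 k l ↔ (k 1 ≤ l 1 ∨ k 2 ≤ l 1 + l 2 ∨ k 3 ≤ l 1 + l 2 + l 3) := by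
  unfold mWin
  constructor
  · rintro ⟨i, h1, h2, h⟩
    interval_cases i <;> simp_all [Finset.sum_Icc_succ_top, Finset.Icc_self] <;> omega
  · rintro (h | h | h)
    · exact ⟨1, by simp [Finset.Icc_self, h]⟩
    · exact ⟨2, by simp [Finset.sum_Icc_succ_top, Finset.Icc_self]; omega⟩
    · exact ⟨3, by simp [Finset.sum_Icc_succ_top, Finset.Icc_self]; omega⟩


def prof (s a b c : ℕ) : ℕ → ℕ := fun j =>
  (if j = s then a else 0) + (if j = s + 1 then b else 0) + (if j = s + 2 then c else 0)

lemma sum_prof (s a b c i : ℕ) (hs : 1 ≤ s) :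
    ∑ j ∈ Finset.Icc 1 i, prof s a b c j =
      (if s ≤ i then a else 0) + (if s + 1 ≤ i then b else 0) +
        (if s + 2 ≤ i then c else 0) := by
  unfold prof
  rw [Finset.sum_add_distrib, Finset.sum_add_distrib,
    sum_single i s a hs, sum_single i (s+1) b (by omega), sum_single i (s+2) c (by omega)]

lemma not_weighted_of_swap (m : ℕ) (n : ℕ → ℕ) (W : (ℕ → ℕ) → Prop)
    (a b c d : ℕ → ℕ)
    (hva : validProfile m n a) (hvb : validProfile m n b)
    (hvc : validProfile m n c) (hvd : validProfile m n d)
    (hWa : W a) (hWb : W b) (hWc : ¬ W c) (hWd : ¬ W d)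
    (hsum : ∀ i, a i + b i = c i + d i) : ¬ mWeighted m n W := by
  rintro ⟨w, q, -, hiff⟩
  have Qa := (hiff a hva).mp hWa
  have Qb := (hiff b hvb).mp hWb
  have Qc : ¬ (q ≤ ∑ i ∈ Finset.Icc 1 m, (c i : ℝ) * w i) := fun h => hWc ((hiff c hvc).mpr h)
  have Qd : ¬ (q ≤ ∑ i ∈ Finset.Icc 1 m, (d i : ℝ) * w i) := fun h => hWd ((hiff d hvd).mpr h)
  push_neg at Qc Qd
  have key : (∑ i ∈ Finset.Icc 1 m, (a i : ℝ) * w i) + (∑ i ∈ Finset.Icc 1 m, (b i : ℝ) * w i)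
      = (∑ i ∈ Finset.Icc 1 m, (c i : ℝ) * w i) + (∑ i ∈ Finset.Icc 1 m, (d i : ℝ) * w i) := by
    rw [← Finset.sum_add_distrib, ← Finset.sum_add_distrib]
    apply Finset.sum_congr rfl
    intro i _
    have := hsum i
    have : ((a i : ℝ) + b i) = ((c i : ℝ) + d i) := by exact_mod_cast congrArg (Nat.cast (R := ℝ)) this
    linear_combination this * w i
  linarith

lemma k_le (m : ℕ) (k : ℕ → ℕ) (hkmono : ∀ i j, 1 ≤ i → i < j → j ≤ m → k i < k j)
    {i j : ℕ} (h1 : 1 ≤ i) (h2 : i ≤ j) (h3 : j ≤ m) : k i ≤ k j := by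
  rcases eq_or_lt_of_le h2 with rfl | h
  · exact le_rfl
  · exact (hkmono i j h1 h h3).le

lemma prof_apply (s a b c j : ℕ) :
    prof s a b c j = if j = s then a else if j = s + 1 then b else if j = s + 2 then c else 0 := by
  unfold prof
  split_ifs <;> omega

lemma valid_prof (m : ℕ) (n : ℕ → ℕ) (s a b c : ℕ) (hs : 1 ≤ s)
    (hsm : s ≤ m) (hbm : s + 1 ≤ m ∨ b = 0) (hcm : s + 2 ≤ m ∨ c = 0)
    (han : a ≤ n s) (hbn : b ≤ n (s+1)) (hcn : c ≤ n (s+2)) :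
    validProfile m n (prof s a b c) := by
  constructor
  · intro j h1 h2
    rw [prof_apply]
    split_ifs with e1 e2 e3
    · subst e1; omega
    · subst e2; omega
    · subst e3; omega
    · omega
  · intro j hj
    rw [prof_apply]
    rcases hbm with hbm | hbm <;> rcases hcm with hcm | hcm <;>
      split_ifs with e1 e2 e3 <;> omega

lemma not_win_prof (m : ℕ) (k : ℕ → ℕ) (s a b c : ℕ) (hs : 1 ≤ s)
    (hkpos : ∀ i, 1 ≤ i → i ≤ m → 0 < k i)
    (hkmono : ∀ i j, 1 ≤ i → i < j → j ≤ m → k i < k j)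
    (h_s : s ≤ m → a < k s)
    (h_s1 : s + 1 ≤ m → a + b < k (s+1))
    (h_s2 : s + 2 ≤ m → a + b + c < k (s+2)) :
    ¬ mWin m k (prof s a b c) := by
  rintro ⟨i, h1, h2, hw⟩
  rw [sum_prof _ _ _ _ _ hs] at hw
  rcases lt_or_ge i s with hi | hi
  · rw [if_neg (by omega), if_neg (by omega), if_neg (by omega)] at hw
    have := hkpos i h1 h2
    omega
  rcases eq_or_lt_of_le hi with rfl | hi1
  · rw [if_pos le_rfl, if_neg (by omega), if_neg (by omega)] at hw
    have := h_s h2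
    omega
  rcases eq_or_lt_of_le (show s + 1 ≤ i by omega) with rfl | hi2
  · rw [if_pos (by omega), if_pos le_rfl, if_neg (by omega)] at hw
    have := h_s1 h2
    omega
  · rw [if_pos (by omega), if_pos (by omega), if_pos (by omega)] at hw
    have e1 := h_s2 (by omega)
    have e2 : k (s+2) ≤ k i := k_le m k hkmono (by omega) (by omega) h2
    omega

lemma win_prof (m : ℕ) (k : ℕ → ℕ) (s a b c : ℕ) (hs : 1 ≤ s) (i : ℕ)
    (h1 : s ≤ i) (h2 : i ≤ m)
    (hk : k i ≤ (if s ≤ i then a else 0) + (if s + 1 ≤ i then b else 0) +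
      (if s + 2 ≤ i then c else 0)) :
    mWin m k (prof s a b c) :=
  ⟨i, by omega, h2, by rw [sum_prof _ _ _ _ _ hs]; exact hk⟩

lemma family_alpha (m : ℕ) (n k : ℕ → ℕ) (s : ℕ) (hs : 1 ≤ s) (hsm : s + 1 ≤ m)
    (hkpos : ∀ i, 1 ≤ i → i ≤ m → 0 < k i)
    (hkmono : ∀ i j, 1 ≤ i → i < j → j ≤ m → k i < k j)
    (hks : 2 ≤ k s) (hns : k s ≤ n s)
    (h2 : k s + 2 ≤ k (s+1)) (hn2 : k (s+1) - k s + 2 ≤ n (s+1)) :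
    ¬ mWeighted m n (mWin m k) := by
  have hmono1 : k s < k (s+1) := hkmono s (s+1) hs (by omega) hsm
  apply not_weighted_of_swap m n (mWin m k)
    (prof s (k s) 0 0) (prof s (k s - 2) (k (s+1) - k s + 2) 0)
    (prof s (k s - 1) 2 0) (prof s (k s - 1) (k (s+1) - k s) 0)
  · exact valid_prof m n s _ _ _ hs (by omega) (by omega) (by right; rfl) hns (by omega) (by omega)
  · exact valid_prof m n s _ _ _ hs (by omega) (by left; omega) (by right; rfl) (by omega) hn2 (by omega)
  · exact valid_prof m n s _ _ _ hs (by omega) (by left; omega) (by right; rfl) (by omega) (by omega) (by omega)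
  · exact valid_prof m n s _ _ _ hs (by omega) (by left; omega) (by right; rfl) (by omega) (by omega) (by omega)
  · exact win_prof m k s _ _ _ hs s le_rfl (by omega) (by rw [if_pos le_rfl, if_neg (by omega), if_neg (by omega)]; omega)
  · exact win_prof m k s _ _ _ hs (s+1) (by omega) hsm
      (by rw [if_pos (by omega), if_pos le_rfl, if_neg (by omega)]; omega)
  · apply not_win_prof m k s _ _ _ hs hkpos hkmono
    · intro _; omega
    · intro _; omega
    · intro h
      have := hkmono (s+1) (s+2) (by omega) (by omega) h
      omega
  · apply not_win_prof m k s _ _ _ hs hkpos hkmono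
    · intro _; omega
    · intro _; omega
    · intro h
      have := hkmono (s+1) (s+2) (by omega) (by omega) h
      omega
  · intro i
    simp only [prof]
    split_ifs <;> omega

lemma family_beta (m : ℕ) (n k : ℕ → ℕ) (s : ℕ) (hs : 1 ≤ s) (hsm : s + 2 ≤ m)
    (hkpos : ∀ i, 1 ≤ i → i ≤ m → 0 < k i)
    (hkmono : ∀ i j, 1 ≤ i → i < j → j ≤ m → k i < k j)
    (hks : 2 ≤ k s) (hns : k s ≤ n s)
    (hnd1 : k (s+1) < k s + n (s+1)) (hnd2 : k (s+2) < k (s+1) + n (s+2)) :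
    ¬ mWeighted m n (mWin m k) := by
  have hmono1 : k s < k (s+1) := hkmono s (s+1) hs (by omega) (by omega)
  have hmono2 : k (s+1) < k (s+2) := hkmono (s+1) (s+2) (by omega) (by omega) hsm
  apply not_weighted_of_swap m n (mWin m k)
    (prof s (k s) 0 0)
    (prof s (k s - 2) (k (s+1) - k s + 1) (k (s+2) - k (s+1) + 1))
    (prof s (k s - 1) 1 1)
    (prof s (k s - 1) (k (s+1) - k s) (k (s+2) - k (s+1)))
  · exact valid_prof m n s _ _ _ hs (by omega) (by omega) (by omega) hns (by omega) (by omega)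
  · exact valid_prof m n s _ _ _ hs (by omega) (by omega) (by omega) (by omega) (by omega) (by omega)
  · exact valid_prof m n s _ _ _ hs (by omega) (by omega) (by omega) (by omega) (by omega) (by omega)
  · exact valid_prof m n s _ _ _ hs (by omega) (by omega) (by omega) (by omega) (by omega) (by omega)
  · exact win_prof m k s _ _ _ hs s le_rfl (by omega) (by rw [if_pos le_rfl, if_neg (by omega), if_neg (by omega)]; omega)
  · exact win_prof m k s _ _ _ hs (s+2) (by omega) hsm
      (by rw [if_pos (by omega), if_pos (by omega), if_pos le_rfl]; omega)
  · apply not_win_prof m k s _ _ _ hs hkpos hkmono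
    · intro _; omega
    · intro _; omega
    · intro _; omega
  · apply not_win_prof m k s _ _ _ hs hkpos hkmono
    · intro _; omega
    · intro _; omega
    · intro _; omega
  · intro i
    simp only [prof]
    split_ifs <;> omega

def natWeighted (m : ℕ) (n k : ℕ → ℕ) : Prop :=
  ∃ (w : ℕ → ℕ) (q : ℕ), ∀ l, (∀ j, 1 ≤ j → j ≤ m → l j ≤ n j) →
    (mWin m k l ↔ q ≤ ∑ i ∈ Finset.Icc 1 m, l i * w i)

lemma natWeighted.toWeighted {m : ℕ} {n k : ℕ → ℕ} (h : natWeighted m n k) :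
    mWeighted m n (mWin m k) := by
  obtain ⟨w, q, hw⟩ := h
  refine ⟨fun i => (w i : ℝ), (q : ℝ), fun i _ _ => Nat.cast_nonneg _, fun l hl => ?_⟩
  rw [hw l hl.1]
  have : ∑ i ∈ Finset.Icc 1 m, (l i : ℝ) * (w i : ℝ)
      = ((∑ i ∈ Finset.Icc 1 m, l i * w i : ℕ) : ℝ) := by push_cast; rfl
  rw [this, Nat.cast_le]

lemma nw_1 (n k : ℕ → ℕ) : natWeighted 1 n k := by
  refine ⟨fun _ => 1, k 1, fun l _ => ?_⟩
  rw [mWin_one]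
  simp [Finset.Icc_self]

lemma nw_2a (n k : ℕ → ℕ) (h : k 2 = k 1 + 1) (hk1 : 1 ≤ k 1) : natWeighted 2 n k := by
  refine ⟨fun i => if i = 1 then k 1 + 1 else k 1, k 1 * (k 1 + 1), fun l hl => ?_⟩
  rw [mWin_two]
  have hsum : ∑ i ∈ Finset.Icc 1 2, l i * (fun i => if i = 1 then k 1 + 1 else k 1) i
      = l 1 * (k 1 + 1) + l 2 * k 1 := by
    simp [Finset.sum_Icc_succ_top, Finset.Icc_self]
  rw [hsum, h]
  constructor
  · rintro (h1 | h1)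
    · nlinarith
    · nlinarith
  · intro h1
    by_contra hc
    push_neg at hc
    obtain ⟨c1, c2⟩ := hc
    nlinarith

lemma nw_2b (n k : ℕ → ℕ) (h : n 2 = k 2 - k 1 + 1) (hk1 : 1 ≤ k 1) (h12 : k 1 < k 2) :
    natWeighted 2 n k := by
  obtain ⟨K, hK⟩ : ∃ K, k 1 = K + 1 := ⟨k 1 - 1, by omega⟩
  have hN : k 2 + 1 = k 1 + n 2 := by omega
  refine ⟨fun i => if i = 1 then n 2 + 1 else 1, K * (n 2 + 1) + n 2, fun l hl => ?_⟩
  have hl2 : l 2 ≤ n 2 := hl 2 (by omega) (by omega)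
  rw [mWin_two]
  have hsum : ∑ i ∈ Finset.Icc 1 2, l i * (fun i => if i = 1 then n 2 + 1 else 1) i
      = l 1 * (n 2 + 1) + l 2 := by
    simp [Finset.sum_Icc_succ_top, Finset.Icc_self]
  rw [hsum]
  constructor
  · rintro (h1 | h1)
    · nlinarith
    · have hl1 : K ≤ l 1 := by omega
      nlinarith
  · intro h1
    by_contra hc
    push_neg at hc
    obtain ⟨c1, c2⟩ := hc
    rcases eq_or_lt_of_le (show l 1 ≤ K by omega) with e | e
    · rw [e] at h1
      have : l 2 < n 2 := by omega
      linarith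
    · have : l 1 * (n 2 + 1) + 1 * (n 2 + 1) ≤ K * (n 2 + 1) := by
        rw [← Nat.add_mul]
        exact Nat.mul_le_mul_right _ (by omega)
      linarith

lemma nw_2c (n k : ℕ → ℕ) (h : k 1 = 1) (hk2 : 1 ≤ k 2) : natWeighted 2 n k := by
  refine ⟨fun i => if i = 1 then k 2 else 1, k 2, fun l hl => ?_⟩
  rw [mWin_two, h]
  have hsum : ∑ i ∈ Finset.Icc 1 2, l i * (fun i => if i = 1 then k 2 else 1) i
      = l 1 * k 2 + l 2 := by
    simp [Finset.sum_Icc_succ_top, Finset.Icc_self]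
  rw [hsum]
  constructor
  · rintro (h1 | h1)
    · nlinarith
    · nlinarith
  · intro h1
    by_contra hc
    push_neg at hc
    obtain ⟨c1, c2⟩ := hc
    have : l 1 = 0 := by omega
    simp [this] at h1
    omega

lemma nw_3b (n k : ℕ → ℕ) (h1 : k 1 = 1) (h : k 3 = k 2 + 1) (hk2 : 1 ≤ k 2) :
    natWeighted 3 n k := by
  refine ⟨fun i => if i = 1 then k 2 * (k 2 + 1) else if i = 2 then k 2 + 1 else k 2,
    k 2 * (k 2 + 1), fun l hl => ?_⟩
  rw [mWin_three, h1, h]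
  have hsum : ∑ i ∈ Finset.Icc 1 3,
      l i * (fun i => if i = 1 then k 2 * (k 2 + 1) else if i = 2 then k 2 + 1 else k 2) i
      = l 1 * (k 2 * (k 2 + 1)) + l 2 * (k 2 + 1) + l 3 * k 2 := by
    simp [Finset.sum_Icc_succ_top, Finset.Icc_self]
  rw [hsum]
  constructor
  · rintro (h1 | h1 | h1)
    · nlinarith [Nat.le_mul_of_pos_left (k 2 * (k 2 + 1)) h1]
    · have f1 : k 2 * (k 2 + 1) ≤ (l 1 + l 2) * (k 2 + 1) := Nat.mul_le_mul h1 le_rfl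
      have f2 : l 1 * (k 2 + 1) ≤ l 1 * (k 2 * (k 2 + 1)) :=
        Nat.mul_le_mul le_rfl (Nat.le_mul_of_pos_left (k 2 + 1) hk2)
      nlinarith [f1, f2]
    · have f1 : (k 2 + 1) * k 2 ≤ (l 1 + l 2 + l 3) * k 2 := Nat.mul_le_mul h1 le_rfl
      have f2 : l 1 * k 2 ≤ l 1 * (k 2 * (k 2 + 1)) :=
        Nat.mul_le_mul le_rfl (Nat.le_mul_of_pos_right (k 2) (by omega))
      have f3 : l 2 * k 2 ≤ l 2 * (k 2 + 1) := Nat.mul_le_mul le_rfl (by omega)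
      nlinarith [f1, f2, f3]
  · intro hq
    by_contra hc
    push_neg at hc
    obtain ⟨c1, c2, c3⟩ := hc
    have hl1 : l 1 = 0 := by omega
    rw [hl1] at hq
    have f1 : (l 2 + l 3) * k 2 ≤ k 2 * k 2 := Nat.mul_le_mul (by omega) le_rfl
    nlinarith [f1]

lemma nw_3c (n k : ℕ → ℕ) (h1 : k 1 = 1) (h : n 3 = k 3 - k 2 + 1)
    (hk2 : 1 ≤ k 2) (h23 : k 2 < k 3) : natWeighted 3 n k := by
  obtain ⟨K, hK⟩ : ∃ K, k 2 = K + 1 := ⟨k 2 - 1, by omega⟩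
  have hN : k 3 = K + n 3 := by omega
  refine ⟨fun i => if i = 1 then K * (n 3 + 1) + n 3 else if i = 2 then n 3 + 1 else 1,
    K * (n 3 + 1) + n 3, fun l hl => ?_⟩
  have hl3 : l 3 ≤ n 3 := hl 3 (by omega) (by omega)
  rw [mWin_three, h1]
  have hsum : ∑ i ∈ Finset.Icc 1 3,
      l i * (fun i => if i = 1 then K * (n 3 + 1) + n 3 else if i = 2 then n 3 + 1 else 1) i
      = l 1 * (K * (n 3 + 1) + n 3) + l 2 * (n 3 + 1) + l 3 := by
    simp [Finset.sum_Icc_succ_top, Finset.Icc_self]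
  rw [hsum]
  have hn3 : 1 ≤ n 3 := by omega
  constructor
  · rintro (hw | hw | hw)
    · nlinarith [Nat.le_mul_of_pos_left (K * (n 3 + 1) + n 3) hw]
    · rcases Nat.eq_zero_or_pos (l 1) with e | e
      · rw [e]
        have f1 : (K + 1) * (n 3 + 1) ≤ l 2 * (n 3 + 1) := Nat.mul_le_mul (by omega) le_rfl
        nlinarith [f1]
      · nlinarith [Nat.le_mul_of_pos_left (K * (n 3 + 1) + n 3) e]
    · rcases Nat.eq_zero_or_pos (l 1) with e | e
      · rw [e]
        have hd : K ≤ l 2 := by omega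
        obtain ⟨d, hd2⟩ : ∃ d, l 2 = K + d := ⟨l 2 - K, by omega⟩
        rw [hd2]
        have h5 : n 3 ≤ d + l 3 := by omega
        nlinarith [Nat.le_mul_of_pos_right d (show 0 < n 3 + 1 by omega)]
      · nlinarith [Nat.le_mul_of_pos_left (K * (n 3 + 1) + n 3) e]
  · intro hq
    by_contra hc
    push_neg at hc
    obtain ⟨c1, c2, c3⟩ := hc
    have hl1 : l 1 = 0 := by omega
    rw [hl1] at hq
    rcases eq_or_lt_of_le (show l 2 ≤ K by omega) with e | e
    · rw [e] at hq
      have : l 3 < n 3 := by omega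
      linarith
    · obtain ⟨e', he'⟩ : ∃ e', K = l 2 + 1 + e' := ⟨K - 1 - l 2, by omega⟩
      rw [he'] at hq
      have f1 : 1 * (n 3 + 1) ≤ (1 + e') * (n 3 + 1) := Nat.mul_le_mul (by omega) le_rfl
      linarith [f1]

lemma mWin_dummy (m : ℕ) (n k : ℕ → ℕ) (hm : 2 ≤ m) (hD : k (m-1) + n m ≤ k m)
    (l : ℕ → ℕ) (hlm : l m ≤ n m) : mWin m k l ↔ mWin (m-1) k l := by
  obtain ⟨m', rfl⟩ : ∃ m', m = m' + 1 := ⟨m - 1, by omega⟩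
  simp only [Nat.add_sub_cancel] at *
  constructor
  · rintro ⟨i, hi1, hi2, hw⟩
    rcases eq_or_lt_of_le hi2 with rfl | hi3
    · refine ⟨m', by omega, le_rfl, ?_⟩
      rw [Finset.sum_Icc_succ_top (by omega)] at hw
      omega
    · exact ⟨i, hi1, by omega, hw⟩
  · rintro ⟨i, hi1, hi2, hw⟩
    exact ⟨i, hi1, by omega, hw⟩

lemma nw_dummy (m : ℕ) (n k : ℕ → ℕ) (hm : 2 ≤ m) (hD : k (m-1) + n m ≤ k m)
    (h : natWeighted (m-1) n k) : natWeighted m n k := by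
  obtain ⟨w, q, hw⟩ := h
  obtain ⟨m', rfl⟩ : ∃ m', m = m' + 1 := ⟨m - 1, by omega⟩
  simp only [Nat.add_sub_cancel] at *
  refine ⟨fun i => if i ≤ m' then w i else 0, q, fun l hl => ?_⟩
  rw [show mWin (m' + 1) k l ↔ mWin (m' + 1 - 1) k l from
    mWin_dummy (m' + 1) n k (by omega) (by simpa) l (hl (m'+1) (by omega) le_rfl)]
  simp only [Nat.add_sub_cancel]
  rw [hw l (fun j a b => hl j a (by omega))]
  have hs : ∑ i ∈ Finset.Icc 1 (m'+1), l i * (fun i => if i ≤ m' then w i else 0) i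
      = ∑ i ∈ Finset.Icc 1 m', l i * w i := by
    rw [Finset.sum_Icc_succ_top (by omega)]
    have h0 : l (m'+1) * (fun i => if i ≤ m' then w i else 0) (m'+1) = 0 := by simp
    rw [h0, add_zero]
    apply Finset.sum_congr rfl
    intro i hi
    simp only [Finset.mem_Icc] at hi
    simp [hi.2]
  rw [hs]

/-- a canonical `m`-level disjunctive hierarchical game
`G = H_∃(n,k)` (so `k_1 ≤ n_1` and `k_i < k_{i-1} + n_i` for `1 < i < m`) is a
weighted majority game iff one of (1)-(4) holds, or (5): `m ∈ {2,3,4}`,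
`k_m ≥ k_{m-1} + n_m`, and the `(m-1)`-level game with sizes
`(n_1, ..., n_{m-1})` and thresholds `(k_1, ..., k_{m-1})` falls under (1)-(4). -/
theorem stmt_16 (m : ℕ) (hm : 1 ≤ m) (n k : ℕ → ℕ)
    (hnpos : ∀ i, 1 ≤ i → i ≤ m → 0 < n i)
    (hkpos : ∀ i, 1 ≤ i → i ≤ m → 0 < k i)
    (hkmono : ∀ i j, 1 ≤ i → i < j → j ≤ m → k i < k j)
    (ha : k 1 ≤ n 1)
    (hb : ∀ i, 1 < i → i < m → k i < k (i - 1) + n i) :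
    mWeighted m n (mWin m k) ↔
      (cond14 m n k ∨
        ((m = 2 ∨ m = 3 ∨ m = 4) ∧ k (m - 1) + n m ≤ k m ∧
          cond14 (m - 1) n k)) := by
  constructor
  · intro hW
    by_contra hC
    rw [not_or] at hC
    obtain ⟨hn14, hn5⟩ := hC
    have hm1 : m ≠ 1 := fun e => hn14 (Or.inl e)
    have hm2 : 2 ≤ m := by omega
    by_cases hk1 : k 1 = 1
    · -- k 1 = 1
      have hm2' : m ≠ 2 := fun e => hn14 (Or.inr (Or.inr (Or.inr ⟨hk1, Or.inl e⟩)))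
      have hm3 : 3 ≤ m := by omega
      have hk2 : 2 ≤ k 2 := by have := hkmono 1 2 le_rfl (by omega) (by omega); omega
      have hn2k2 : k 2 ≤ n 2 := by have := hb 2 (by omega) (by omega); norm_num at this; omega
      rcases Nat.lt_or_ge m 4 with hm4 | hm4
      · have hme : m = 3 := by omega
        subst hme
        by_cases hD : k 2 + n 3 ≤ k 3
        · exact hn5 ⟨Or.inr (Or.inl rfl), by simpa using hD,
            Or.inr (Or.inr (Or.inr ⟨hk1, Or.inl rfl⟩))⟩
        · push_neg at hD
          have hne : ¬(k 3 = k 2 + 1 ∨ n 3 = k 3 - k 2 + 1) := fun hor =>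
            hn14 (Or.inr (Or.inr (Or.inr ⟨hk1, Or.inr ⟨rfl, hor⟩⟩)))
          rw [not_or] at hne
          have h23 : k 2 < k 3 := hkmono 2 3 (by omega) (by omega) le_rfl
          exact absurd hW (family_alpha 3 n k 2 (by omega) (by omega) hkpos hkmono hk2 hn2k2
            (show k 2 + 2 ≤ k 3 by omega) (show k 3 - k 2 + 2 ≤ n 3 by omega))
      · rcases Nat.lt_or_ge m 5 with hm5 | hm5
        · have hme : m = 4 := by omega
          subst hme
          by_cases hD : k 3 + n 4 ≤ k 4
          · have hne : ¬ cond14 3 n k := fun h3 =>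
              hn5 ⟨Or.inr (Or.inr rfl), by simpa using hD, h3⟩
            have hne2 : ¬(k 3 = k 2 + 1 ∨ n 3 = k 3 - k 2 + 1) := fun hor =>
              hne (Or.inr (Or.inr (Or.inr ⟨hk1, Or.inr ⟨rfl, hor⟩⟩)))
            rw [not_or] at hne2
            have h23 : k 2 < k 3 := hkmono 2 3 (by omega) (by omega) (by omega)
            have hnd3 : k 3 < k 2 + n 3 := by have := hb 3 (by omega) (by omega); simpa using this
            exact absurd hW (family_alpha 4 n k 2 (by omega) (by omega) hkpos hkmono hk2 hn2k2
              (show k 2 + 2 ≤ k 3 by omega) (show k 3 - k 2 + 2 ≤ n 3 by omega))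
          · push_neg at hD
            have hnd3 : k 3 < k 2 + n 3 := by have := hb 3 (by omega) (by omega); simpa using this
            exact absurd hW (family_beta 4 n k 2 (by omega) (by omega) hkpos hkmono hk2 hn2k2
              (show k 3 < k 2 + n 3 from hnd3) (show k 4 < k 3 + n 4 from hD))
        · have hnd3 : k 3 < k 2 + n 3 := by have := hb 3 (by omega) (by omega); simpa using this
          have hnd4 : k 4 < k 3 + n 4 := by have := hb 4 (by omega) (by omega); simpa using this
          exact absurd hW (family_beta m n k 2 (by omega) (by omega) hkpos hkmono hk2 hn2k2
            (show k 3 < k 2 + n 3 from hnd3) (show k 4 < k 3 + n 4 from hnd4))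
    · -- 2 ≤ k 1
      have hk1' : 2 ≤ k 1 := by have := hkpos 1 le_rfl (by omega); omega
      rcases Nat.lt_or_ge m 3 with hm3 | hm3
      · have hme : m = 2 := by omega
        subst hme
        have hD : k 2 < k 1 + n 2 := by
          by_contra hD'
          push_neg at hD'
          exact hn5 ⟨Or.inl rfl, by simpa using hD', Or.inl rfl⟩
        have e1 : k 2 ≠ k 1 + 1 := fun e => hn14 (Or.inr (Or.inl ⟨rfl, e⟩))
        have e2 : n 2 ≠ k 2 - k 1 + 1 := fun e => hn14 (Or.inr (Or.inr (Or.inl ⟨rfl, e⟩)))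
        have h12 : k 1 < k 2 := hkmono 1 2 le_rfl (by omega) le_rfl
        exact absurd hW (family_alpha 2 n k 1 le_rfl le_rfl hkpos hkmono hk1' ha
          (show k 1 + 2 ≤ k 2 by omega) (show k 2 - k 1 + 2 ≤ n 2 by omega))
      · rcases Nat.lt_or_ge m 4 with hm4 | hm4
        · have hme : m = 3 := by omega
          subst hme
          by_cases hD : k 2 + n 3 ≤ k 3
          · have hne : ¬ cond14 2 n k := fun h2 =>
              hn5 ⟨Or.inr (Or.inl rfl), by simpa using hD, h2⟩
            have e1 : k 2 ≠ k 1 + 1 := fun e => hne (Or.inr (Or.inl ⟨rfl, e⟩))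
            have e2 : n 2 ≠ k 2 - k 1 + 1 := fun e => hne (Or.inr (Or.inr (Or.inl ⟨rfl, e⟩)))
            have hnd2 : k 2 < k 1 + n 2 := by have := hb 2 (by omega) (by omega); simpa using this
            have h12 : k 1 < k 2 := hkmono 1 2 le_rfl (by omega) (by omega)
            exact absurd hW (family_alpha 3 n k 1 le_rfl (by omega) hkpos hkmono hk1' ha
              (show k 1 + 2 ≤ k 2 by omega) (show k 2 - k 1 + 2 ≤ n 2 by omega))
          · push_neg at hD
            have hnd2 : k 2 < k 1 + n 2 := by have := hb 2 (by omega) (by omega); simpa using this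
            exact absurd hW (family_beta 3 n k 1 le_rfl le_rfl hkpos hkmono hk1' ha
              (show k 2 < k 1 + n 2 from hnd2) (show k 3 < k 2 + n 3 from hD))
        · have hnd2 : k 2 < k 1 + n 2 := by have := hb 2 (by omega) (by omega); simpa using this
          have hnd3 : k 3 < k 2 + n 3 := by have := hb 3 (by omega) (by omega); simpa using this
          exact absurd hW (family_beta m n k 1 le_rfl (by omega) hkpos hkmono hk1' ha
            (show k 2 < k 1 + n 2 from hnd2) (show k 3 < k 2 + n 3 from hnd3))
  · rintro (hc | ⟨hm234, hD, hc5⟩)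
    · rcases hc with h1 | ⟨h2, hk⟩ | ⟨h2, hn⟩ | ⟨hk1, h2 | ⟨h3, hor⟩⟩
      · subst h1
        exact (nw_1 n k).toWeighted
      · subst h2
        exact (nw_2a n k hk (hkpos 1 le_rfl (by omega))).toWeighted
      · subst h2
        exact (nw_2b n k hn (hkpos 1 le_rfl (by omega))
          (hkmono 1 2 le_rfl (by omega) le_rfl)).toWeighted
      · subst h2
        exact (nw_2c n k hk1 (hkpos 2 (by omega) le_rfl)).toWeighted
      · subst h3
        rcases hor with h | h
        · exact (nw_3b n k hk1 h (hkpos 2 (by omega) (by omega))).toWeighted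
        · exact (nw_3c n k hk1 h (hkpos 2 (by omega) (by omega))
            (hkmono 2 3 (by omega) (by omega) le_rfl)).toWeighted
    · rcases hm234 with h2 | h3 | h4
      · subst h2
        exact (nw_dummy 2 n k le_rfl (by simpa using hD) (nw_1 n k)).toWeighted
      · subst h3
        unfold cond14 at hc5
        norm_num at hc5
        have hsub : natWeighted 2 n k := by
          rcases hc5 with hk | hn | hk1
          · exact nw_2a n k hk (hkpos 1 le_rfl (by omega))
          · exact nw_2b n k hn (hkpos 1 le_rfl (by omega)) (hkmono 1 2 le_rfl (by omega) (by omega))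
          · exact nw_2c n k hk1 (hkpos 2 (by omega) (by omega))
        exact (nw_dummy 3 n k (by omega) (by simpa using hD) hsub).toWeighted
      · subst h4
        unfold cond14 at hc5
        norm_num at hc5
        obtain ⟨hk1, hor⟩ := hc5
        have hsub : natWeighted 3 n k := by
          rcases hor with h | h
          · exact nw_3b n k hk1 h (hkpos 2 (by omega) (by omega))
          · exact nw_3c n k hk1 h (hkpos 2 (by omega) (by omega))
              (hkmono 2 3 (by omega) (by omega) (by omega))
        exact (nw_dummy 4 n k (by omega) (by simpa using hD) hsub).toWeighted
end

section
/- A two-level disjunctive hierarchical game with a large gap and a large second level is not weighted: let G = H_∃((n_1,n_2),(k_1,k_2)) be the canonical two-level disjunctive hierarchical game with 2 ≤ k_1 ≤ n_1, k_2 ≥ k_1+2, and n_2 ≥ k_2−k_1+2. Then G is not a weighted majority game; in fact G admits the certificate of non-weightedness ({1^{k_1}}, {1^{k_1−2}, 2^{k_2−k_1+2}} ; {1^{k_1−1}, 2^{⌊(k_2−k_1+2)/2⌋}}, {1^{k_1−1}, 2^{⌈(k_2−k_1+2)/2⌉}}). -/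
/-- Winning predicate of the canonical two-level disjunctive hierarchical game
`H_∃((n_1,n_2),(k_1,k_2))`: `{1^{ℓ_1}, 2^{ℓ_2}}` is winning iff `ℓ_1 ≥ k_1` or
`ℓ_1 + ℓ_2 ≥ k_2`. -/
def win2 (k1 k2 l1 l2 : ℕ) : Prop :=
  k1 ≤ l1 ∨ k2 ≤ l1 + l2

/-- The two-level game is a weighted majority game: there are nonnegative real
weights `w_1, w_2` and a real `q` with `{1^{ℓ_1}, 2^{ℓ_2}}` winning iff
`ℓ_1 w_1 + ℓ_2 w_2 ≥ q`. -/
def weighted2 (n1 n2 k1 k2 : ℕ) : Prop :=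
  ∃ (w1 w2 q : ℝ), 0 ≤ w1 ∧ 0 ≤ w2 ∧
    ∀ l1 l2 : ℕ, l1 ≤ n1 → l2 ≤ n2 →
      (win2 k1 k2 l1 l2 ↔ q ≤ (l1 : ℝ) * w1 + (l2 : ℝ) * w2)

/-- a two-level disjunctive hierarchical game with
`2 ≤ k_1 ≤ n_1`, `k_2 ≥ k_1 + 2` and `n_2 ≥ k_2 - k_1 + 2` is not a weighted
majority game; in fact it admits the certificate of non-weightedness
`({1^{k_1}}, {1^{k_1-2}, 2^{k_2-k_1+2}} ; {1^{k_1-1}, 2^{⌊(k_2-k_1+2)/2⌋}},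
{1^{k_1-1}, 2^{⌈(k_2-k_1+2)/2⌉}})`: the level-wise totals on the two sides
agree (a trading transform), the two left-hand submultisets are valid and
winning, and the two right-hand submultisets are valid and losing. -/
theorem stmt_17 (n1 n2 k1 k2 : ℕ)
    (hk1 : 2 ≤ k1) (hk1n1 : k1 ≤ n1)
    (hk2 : k1 + 2 ≤ k2) (hn2 : k2 - k1 + 2 ≤ n2) :
    ¬ weighted2 n1 n2 k1 k2 ∧
      (k1 + (k1 - 2) = (k1 - 1) + (k1 - 1) ∧
        0 + (k2 - k1 + 2) = (k2 - k1 + 2) / 2 + (k2 - k1 + 2 + 1) / 2) ∧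
      (k1 ≤ n1 ∧ 0 ≤ n2) ∧ win2 k1 k2 k1 0 ∧
      (k1 - 2 ≤ n1 ∧ k2 - k1 + 2 ≤ n2) ∧ win2 k1 k2 (k1 - 2) (k2 - k1 + 2) ∧
      (k1 - 1 ≤ n1 ∧ (k2 - k1 + 2) / 2 ≤ n2) ∧
      ¬ win2 k1 k2 (k1 - 1) ((k2 - k1 + 2) / 2) ∧
      (k1 - 1 ≤ n1 ∧ (k2 - k1 + 2 + 1) / 2 ≤ n2) ∧
      ¬ win2 k1 k2 (k1 - 1) ((k2 - k1 + 2 + 1) / 2) := by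
  refine ⟨?_, by omega, ⟨hk1n1, Nat.zero_le _⟩, Or.inl le_rfl,
    ⟨by omega, hn2⟩, Or.inr (by omega), ⟨by omega, by omega⟩,
    by unfold win2; omega, ⟨by omega, by omega⟩, by unfold win2; omega⟩
  rintro ⟨w1, w2, q, hw1, hw2, h⟩
  have hA := (h k1 0 hk1n1 (Nat.zero_le _)).mp (Or.inl le_rfl)
  have hB := (h (k1 - 2) (k2 - k1 + 2) (by omega) hn2).mp (Or.inr (by omega))
  have hC : ((k1 - 1 : ℕ) : ℝ) * w1 + (((k2 - k1 + 2) / 2 : ℕ) : ℝ) * w2 < q := by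
    by_contra hle
    push_neg at hle
    have := (h (k1 - 1) ((k2 - k1 + 2) / 2) (by omega) (by omega)).mpr hle
    unfold win2 at this; omega
  have hD : ((k1 - 1 : ℕ) : ℝ) * w1 + (((k2 - k1 + 2 + 1) / 2 : ℕ) : ℝ) * w2 < q := by
    by_contra hle
    push_neg at hle
    have := (h (k1 - 1) ((k2 - k1 + 2 + 1) / 2) (by omega) (by omega)).mpr hle
    unfold win2 at this; omega
  have e1 : ((k1 : ℝ)) + ((k1 - 2 : ℕ) : ℝ) = ((k1 - 1 : ℕ) : ℝ) + ((k1 - 1 : ℕ) : ℝ) := by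
    have : k1 + (k1 - 2) = (k1 - 1) + (k1 - 1) := by omega
    exact_mod_cast congrArg (Nat.cast : ℕ → ℝ) this
  have e2 : ((k2 - k1 + 2 : ℕ) : ℝ) = (((k2 - k1 + 2) / 2 : ℕ) : ℝ) + (((k2 - k1 + 2 + 1) / 2 : ℕ) : ℝ) := by
    have : (k2 - k1 + 2) = (k2 - k1 + 2) / 2 + (k2 - k1 + 2 + 1) / 2 := by omega
    exact_mod_cast congrArg (Nat.cast : ℕ → ℝ) this
  have E1 : ((k1 : ℝ)) * w1 + ((k1 - 2 : ℕ) : ℝ) * w1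
      = ((k1 - 1 : ℕ) : ℝ) * w1 + ((k1 - 1 : ℕ) : ℝ) * w1 := by
    rw [← add_mul, ← add_mul, e1]
  have E2 : ((k2 - k1 + 2 : ℕ) : ℝ) * w2
      = (((k2 - k1 + 2) / 2 : ℕ) : ℝ) * w2 + (((k2 - k1 + 2 + 1) / 2 : ℕ) : ℝ) * w2 := by
    rw [← add_mul, e2]
  push_cast at hA
  linarith
end
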